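/- arXiv:2405.17574 — 11 statements merged into one kernel-verified Lean document; each statement's English description precedes it below -/
import Mathlib

section
/- Let $X$ be an infinite compact metric space and $f: X \to X$ a homeomorphism satisfying the gluing-orbit property. Then there exists $\varepsilon_0 > 0$ such that for every $\varepsilon \in (0, \varepsilon_0)$ and every $x \in X$ there exist a nonempty compact perfect set $C_x \subseteq W^s_\varepsilon(x)$ and a nonempty compact perfect set $D_x \subseteq W^u_\varepsilon(x)$. -/
open Function Metric Filter
open Topology
set_option linter.unusedVariables false
set_option linter.unusedSectionVars false

variable {X : Type*}

/-- `(c, t)` is `ε`-traced by `z`: an orbit sequence `c = (x_j, m_j)_{j ∈ ℕ}` with gap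
`t = (t_j)_{j ∈ ℕ}` is `ε`-traced by `z` if `d(f^(s_j + l)(z), f^l(x_j)) ≤ ε` for all
`0 ≤ l ≤ m_j`, where `s_j = ∑_{i<j} (m_i + t_i)`. -/
def TracedBy [MetricSpace X] (f : X → X) (c : ℕ → X × ℕ) (t : ℕ → ℕ) (ε : ℝ) (z : X) : Prop :=
  ∀ j l, l ≤ (c j).2 →
    dist (f^[(∑ i ∈ Finset.range j, ((c i).2 + t i)) + l] z) (f^[l] (c j).1) ≤ ε

/-- `f` has the gluing-orbit property: for each `ε > 0` there is `M ∈ ℕ` such that every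
orbit sequence admits a gap with entries in `{1, …, M}` so that the pair is `ε`-traced by
some point. -/
def GluingOrbit [MetricSpace X] (f : X → X) : Prop :=
  ∀ ε : ℝ, 0 < ε → ∃ M : ℕ, ∀ c : ℕ → X × ℕ, ∃ t : ℕ → ℕ,
    (∀ j, 1 ≤ t j ∧ t j ≤ M) ∧ ∃ z : X, TracedBy f c t ε z
/-- The `ε`-stable set of `x`. -/
def Ws [MetricSpace X] (f : X → X) (ε : ℝ) (x : X) : Set X :=
  {y | ∀ k : ℕ, dist (f^[k] y) (f^[k] x) ≤ ε}
/-- The `ε`-unstable set of `x` (for a homeomorphism `f`): the points whose backward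
iterates stay `ε`-close to those of `x`. -/
def Wu [MetricSpace X] (f : X ≃ₜ X) (ε : ℝ) (x : X) : Set X :=
  {y | ∀ k : ℕ, dist ((f.symm : X → X)^[k] y) ((f.symm : X → X)^[k] x) ≤ ε}

section Aux
variable [MetricSpace X]

lemma ws_mono {f : X → X} {ε ε' : ℝ} (h : ε ≤ ε') (x : X) : Ws f ε x ⊆ Ws f ε' x :=
  fun _ hy k => (hy k).trans h

lemma self_mem_ws {f : X → X} {ε : ℝ} (h : 0 ≤ ε) (x : X) : x ∈ Ws f ε x := by
  intro k; simp [h]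

lemma isClosed_ws {f : X → X} (hf : Continuous f) (ε : ℝ) (x : X) : IsClosed (Ws f ε x) := by
  have : Ws f ε x = ⋂ k : ℕ, {y | dist (f^[k] y) (f^[k] x) ≤ ε} := by
    ext y; simp [Ws, Set.mem_iInter]
  rw [this]
  exact isClosed_iInter fun k =>
    isClosed_le ((hf.iterate k).dist continuous_const) continuous_const

lemma ultra_limit [CompactSpace X] (𝒰 : Ultrafilter ℕ) (z : ℕ → X) :
    ∃ p : X, Tendsto z 𝒰 (𝓝 p) := by
  obtain ⟨p, -, hp⟩ := isCompact_univ.ultrafilter_le_nhds (𝒰.map z)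
    (by simp [le_principal_iff])
  exact ⟨p, hp⟩

lemma ultra_mem_closed {𝒰 : Ultrafilter ℕ} {z : ℕ → X} {p : X} (hz : Tendsto z 𝒰 (𝓝 p))
    {A : Set X} (hA : IsClosed A) (h : {n | z n ∈ A} ∈ 𝒰) : p ∈ A :=
  hA.mem_of_tendsto hz h

lemma ultra_const_val {M : ℕ} (𝒰 : Ultrafilter ℕ) {v : ℕ → ℕ} (hv : ∀ n, v n ∈ Finset.Icc 1 M) :
    ∃ τ ∈ Finset.Icc 1 M, {n | v n = τ} ∈ 𝒰 := by
  have hU : (⋃ τ ∈ (↑(Finset.Icc 1 M) : Set ℕ), {n | v n = τ}) ∈ 𝒰 := by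
    refine Filter.mem_of_superset Filter.univ_mem ?_
    intro n _
    exact Set.mem_biUnion (hv n) rfl
  rcases (Ultrafilter.finite_biUnion_mem_iff (Finset.Icc 1 M).finite_toSet).mp hU with ⟨τ, hτ, hm⟩
  exact ⟨τ, hτ, hm⟩

lemma iterate_cancel_iterate {g h : X → X} (hgh : ∀ x, g (h x) = x) (a c : ℕ) (x : X) :
    g^[a] (h^[a + c] x) = h^[c] x := by
  induction a with
  | zero => simp
  | succ a ih =>
    have h1 : h^[a + 1 + c] x = h (h^[a + c] x) := by
      rw [show a + 1 + c = (a + c) + 1 by ring, Function.iterate_succ_apply']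
    rw [h1, Function.iterate_succ_apply, hgh, ih]

end Aux

section Main
variable [MetricSpace X] [CompactSpace X]

lemma traced_fact {f : X → X} {c : ℕ → X × ℕ} {t : ℕ → ℕ} {ε : ℝ} {z : X}
    (h : TracedBy f c t ε z) (j l : ℕ) (hl : l ≤ (c j).2) :
    dist (f^[(∑ i ∈ Finset.range j, ((c i).2 + t i)) + l] z) (f^[l] (c j).1) ≤ ε := h j l hl

/-- From any point `u₀`, there is `z` with `dist z u₀ ≤ γ` and some forward iterate of `z`
belonging to `Ws g γ x`. -/
lemma reach_ws (g : X ≃ₜ X) (hg : GluingOrbit (⇑g)) (x u₀ : X) {γ : ℝ} (hγ : 0 < γ) :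
    ∃ (z : X) (τ : ℕ), 1 ≤ τ ∧ dist z u₀ ≤ γ ∧ (⇑g)^[τ] z ∈ Ws (⇑g) γ x := by
  obtain ⟨M, hM⟩ := hg γ hγ
  set c : ℕ → ℕ → X × ℕ := fun n j => if j = 0 then (u₀, 0) else (x, n) with hc
  choose t ht hz using fun n => hM (c n)
  choose z htr using hz
  obtain ⟨𝒰, h𝒰⟩ : ∃ 𝒰 : Ultrafilter ℕ, (𝒰 : Filter ℕ) ≤ atTop :=
    ⟨Ultrafilter.of atTop, Ultrafilter.of_le _⟩
  obtain ⟨τ, hτIcc, hτmem⟩ := ultra_const_val 𝒰 (v := fun n => t n 0) (fun n => by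
    simpa [Finset.mem_Icc] using ⟨(ht n 0).1, (ht n 0).2⟩)
  obtain ⟨p, hp⟩ := ultra_limit 𝒰 z
  have hd0 : ∀ n, dist (z n) u₀ ≤ γ := by
    intro n
    have := htr n 0 0 (by simp [hc])
    simpa [hc] using this
  have hkey : ∀ n l, l ≤ n → dist ((⇑g)^[t n 0 + l] (z n)) ((⇑g)^[l] x) ≤ γ := by
    intro n l hl
    have := htr n 1 l (by simp [hc, hl])
    simpa [hc] using this
  have hpd : dist p u₀ ≤ γ := by
    refine ultra_mem_closed hp (A := {w | dist w u₀ ≤ γ}) ?_ ?_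
    · exact isClosed_le (continuous_id.dist continuous_const) continuous_const
    · exact Filter.mem_of_superset Filter.univ_mem (fun n _ => hd0 n)
  have hps : ∀ k : ℕ, dist ((⇑g)^[τ + k] p) ((⇑g)^[k] x) ≤ γ := by
    intro k
    refine ultra_mem_closed hp (A := {w | dist ((⇑g)^[τ + k] w) ((⇑g)^[k] x) ≤ γ}) ?_ ?_
    · exact isClosed_le ((g.continuous.iterate _).dist continuous_const) continuous_const
    · have h1 : {n | k ≤ n} ∈ (𝒰 : Filter ℕ) := h𝒰 (Filter.mem_atTop k)
      filter_upwards [h1, hτmem] with n hn hτn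
      have := hkey n k hn
      rw [hτn] at this
      exact this
  obtain ⟨hτ1, -⟩ := Finset.mem_Icc.mp hτIcc
  refine ⟨p, τ, hτ1, hpd, fun k => ?_⟩
  rw [← Function.iterate_add_apply]
  rw [Nat.add_comm k τ]
  exact hps k

/-- If there is an `(m, 2β)`-separated set with more than `M` elements, where `M` is a gluing
constant for `β`, then every `β`-stable set contains two distinct points. -/
lemma pair_of_separated (g : X ≃ₜ X) {β : ℝ} (hβ : 0 < β) {M : ℕ}
    (hM : ∀ c : ℕ → X × ℕ, ∃ t : ℕ → ℕ,
      (∀ j, 1 ≤ t j ∧ t j ≤ M) ∧ ∃ z : X, TracedBy (⇑g) c t β z)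
    (x : X) (m : ℕ) (S : Finset X)
    (hsep : ∀ a ∈ S, ∀ b ∈ S, a ≠ b → ∃ l ≤ m, 2 * β < dist ((⇑g)^[l] a) ((⇑g)^[l] b))
    (hcard : M < S.card) :
    ∃ y₁ y₂, y₁ ∈ Ws (⇑g) β x ∧ y₂ ∈ Ws (⇑g) β x ∧ y₁ ≠ y₂ := by
  obtain ⟨𝒰, h𝒰⟩ : ∃ 𝒰 : Ultrafilter ℕ, (𝒰 : Filter ℕ) ≤ atTop :=
    ⟨Ultrafilter.of atTop, Ultrafilter.of_le _⟩
  set c : X → ℕ → ℕ → X × ℕ := fun y n j => if j = 0 then (y, m) else (x, n) with hc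
  choose t ht hz using fun y n => hM (c y n)
  choose z htr using hz
  -- stabilized gap and limit point for each y
  have hval : ∀ y, ∃ τ ∈ Finset.Icc 1 M, {n | t y n 0 = τ} ∈ 𝒰 := fun y =>
    ultra_const_val 𝒰 (v := fun n => t y n 0) (fun n => by
      simpa [Finset.mem_Icc] using ⟨(ht y n 0).1, (ht y n 0).2⟩)
  choose τ hτIcc hτmem using hval
  have hlim : ∀ y, ∃ p : X, Tendsto (z y) 𝒰 (𝓝 p) := fun y => ultra_limit 𝒰 (z y)
  choose w hw using hlim
  -- property (i): the limit point shadows y for m steps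
  have hshadow : ∀ y, ∀ l ≤ m, dist ((⇑g)^[l] (w y)) ((⇑g)^[l] y) ≤ β := by
    intro y l hl
    refine ultra_mem_closed (hw y) (A := {q | dist ((⇑g)^[l] q) ((⇑g)^[l] y) ≤ β}) ?_ ?_
    · exact isClosed_le ((g.continuous.iterate _).dist continuous_const) continuous_const
    · refine Filter.mem_of_superset Filter.univ_mem (fun n _ => ?_)
      have := htr y n 0 l (by simp [hc, hl])
      simpa [hc] using this
  -- property (ii): `g^[m + τ y] (w y) ∈ Ws g β x`
  have hstab : ∀ y, (⇑g)^[m + τ y] (w y) ∈ Ws (⇑g) β x := by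
    intro y k
    rw [← Function.iterate_add_apply, Nat.add_comm k (m + τ y)]
    refine ultra_mem_closed (hw y)
      (A := {q | dist ((⇑g)^[m + τ y + k] q) ((⇑g)^[k] x) ≤ β}) ?_ ?_
    · exact isClosed_le ((g.continuous.iterate _).dist continuous_const) continuous_const
    · have h1 : {n | k ≤ n} ∈ (𝒰 : Filter ℕ) := h𝒰 (Filter.mem_atTop k)
      filter_upwards [h1, hτmem y] with n hn hτn
      have := htr y n 1 k (by simp [hc, hn])
      simp only [hc] at this
      simp only [Finset.sum_range_one] at this
      simpa [hτn, Nat.add_assoc] using this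
  -- pigeonhole
  have hmaps : ∀ y ∈ S, τ y ∈ Finset.Icc 1 M := fun y _ => hτIcc y
  have hcard' : (Finset.Icc 1 M).card < S.card := by
    rwa [Nat.card_Icc, Nat.add_sub_cancel]
  obtain ⟨a, ha, b, hb, hab, htab⟩ :=
    Finset.exists_ne_map_eq_of_card_lt_of_maps_to hcard' hmaps
  refine ⟨(⇑g)^[m + τ a] (w a), (⇑g)^[m + τ b] (w b), hstab a, hstab b, ?_⟩
  intro heq
  rw [htab] at heq
  have hwab : w a = w b := (g.injective.iterate (m + τ b)) heq
  obtain ⟨l, hl, hgt⟩ := hsep a ha b hb hab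
  have h1 := hshadow a l hl
  have h2 := hshadow b l hl
  rw [hwab] at h1
  have : dist ((⇑g)^[l] a) ((⇑g)^[l] b) ≤ 2 * β := by
    have h3 := dist_triangle ((⇑g)^[l] a) ((⇑g)^[l] (w b)) ((⇑g)^[l] b)
    have h4 : dist ((⇑g)^[l] a) ((⇑g)^[l] (w b)) ≤ β := by rw [dist_comm]; exact h1
    linarith
  linarith

lemma no_isolated [Infinite X] (g : X ≃ₜ X) (hg : GluingOrbit (⇑g)) (x₀ : X) :
    ¬ IsOpen ({x₀} : Set X) := by
  classical
  intro hopen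
  obtain ⟨ρ, hρ, hball⟩ := (Metric.isOpen_iff).mp hopen x₀ rfl
  have hball' : ∀ y : X, dist y x₀ < ρ → y = x₀ := by
    intro y hy
    have : y ∈ ball x₀ ρ := by simpa [mem_ball] using hy
    simpa using hball this
  -- Step I : x₀ is periodic
  have hper : ∃ p : ℕ, 1 ≤ p ∧ (⇑g)^[p] x₀ = x₀ := by
    obtain ⟨M, hM⟩ := hg (ρ/2) (by linarith)
    obtain ⟨t, ht, z, htr⟩ := hM (fun _ => (x₀, 0))
    have h0 := htr 0 0 (by simp)
    simp at h0
    have hz : z = x₀ := hball' z (by linarith)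
    have h2 := htr 2 0 (by simp)
    simp [Finset.sum_range_succ, hz] at h2
    refine ⟨t 0 + t 1, by have := (ht 0).1; omega, ?_⟩
    exact hball' _ (by linarith)
  obtain ⟨p, hp1, hpfix⟩ := hper
  -- Step II : the forward orbit of x₀ approaches every point
  have happrox : ∀ (y : X) (δ : ℝ), 0 < δ → ∃ k : ℕ, dist ((⇑g)^[k] x₀) y ≤ δ := by
    intro y δ hδ
    obtain ⟨M, hM⟩ := hg (min δ (ρ/2)) (by positivity)
    obtain ⟨t, ht, z, htr⟩ := hM (fun j => if j = 0 then (x₀, 0) else (y, 0))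
    have h0 := htr 0 0 (by simp)
    simp at h0
    have hz : z = x₀ := by
      refine hball' z ?_
      have := min_le_right δ (ρ/2)
      linarith
    have h1 := htr 1 0 (by simp)
    simp [hz] at h1
    exact ⟨t 0, h1.1⟩
  -- Step III : orbit is finite, hence X is finite: contradiction
  have hfixmul : ∀ q : ℕ, (⇑g)^[p * q] x₀ = x₀ := by
    intro q
    induction q with
    | zero => simp
    | succ q ih => rw [Nat.mul_succ, Function.iterate_add_apply, hpfix, ih]
  have horbit : ∀ k : ℕ, (⇑g)^[k] x₀ = (⇑g)^[k % p] x₀ := by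
    intro k
    conv_lhs => rw [show k = k % p + p * (k / p) from (Nat.mod_add_div k p).symm]
    rw [Function.iterate_add_apply, hfixmul]
  set O : Finset X := (Finset.range p).image (fun k => (⇑g)^[k] x₀) with hO
  have hmemO : ∀ k : ℕ, (⇑g)^[k] x₀ ∈ O := by
    intro k
    rw [horbit k]
    exact Finset.mem_image_of_mem _ (Finset.mem_range.mpr (Nat.mod_lt _ (by omega)))
  have hsub : (Set.univ : Set X) ⊆ ↑O := by
    intro y _
    have hyc : y ∈ closure (↑O : Set X) := by
      rw [Metric.mem_closure_iff]
      intro δ hδ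
      obtain ⟨k, hk⟩ := happrox y (δ/2) (by linarith)
      exact ⟨(⇑g)^[k] x₀, hmemO k, by rw [dist_comm]; linarith⟩
    rwa [(O.finite_toSet.isClosed).closure_eq] at hyc
  have hfin : Finite X := by
    have := Set.Finite.subset O.finite_toSet hsub
    rwa [Set.finite_univ_iff] at this
  exact not_finite X
/-- Every `β`-stable set contains two distinct points. -/
lemma exists_pair [Infinite X] (g : X ≃ₜ X) (hg : GluingOrbit (⇑g)) {β : ℝ} (hβ : 0 < β)
    (x : X) : ∃ y₁ y₂, y₁ ∈ Ws (⇑g) β x ∧ y₂ ∈ Ws (⇑g) β x ∧ y₁ ≠ y₂ := by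
  classical
  by_contra hcon
  have hcol : ∀ y ∈ Ws (⇑g) β x, y = x := by
    intro y hy
    by_contra hne
    exact hcon ⟨y, x, hy, self_mem_ws hβ.le x, hne⟩
  obtain ⟨M, hM⟩ := hg (β/8) (by positivity)
  -- all separated sets have at most M elements
  have hbound : ∀ (m : ℕ) (S : Finset X),
      (∀ a ∈ S, ∀ b ∈ S, a ≠ b → ∃ l ≤ m, 2 * (β/8) < dist ((⇑g)^[l] a) ((⇑g)^[l] b)) →
      S.card ≤ M := by
    intro m S hsep
    by_contra hgt
    obtain ⟨y₁, y₂, h1, h2, hne⟩ :=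
      pair_of_separated g (by positivity : (0:ℝ) < β/8) hM x m S hsep (by omega)
    have e1 := hcol y₁ (ws_mono (by linarith) x h1)
    have e2 := hcol y₂ (ws_mono (by linarith) x h2)
    exact hne (e1.trans e2.symm)
  -- a finite cover by stable sets
  have hcover : ∃ F : Finset X, ∀ y : X, ∃ a ∈ F, y ∈ Ws (⇑g) (2*(β/8)) a := by
    by_contra hno
    push_neg at hno
    choose Y hY using hno
    have hstep : ∀ (F : Finset X), ∀ a ∈ F,
        ∃ k, 2*(β/8) < dist ((⇑g)^[k] (Y F)) ((⇑g)^[k] a) := by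
      intro F a ha
      have h1 := hY F a ha
      simp only [Ws, Set.mem_setOf_eq, not_forall, not_le] at h1
      obtain ⟨k, hk⟩ := h1
      exact ⟨k, hk⟩
    set A : ℕ → Finset X := fun n => Nat.rec ∅ (fun _ Fn => insert (Y Fn) Fn) n with hA
    have hAsucc : ∀ n, A (n+1) = insert (Y (A n)) (A n) := fun n => rfl
    have hYnot : ∀ n, Y (A n) ∉ A n := by
      intro n hmem
      obtain ⟨k, hk⟩ := hstep (A n) _ hmem
      rw [dist_self] at hk
      linarith
    have hsepA : ∀ n, ∀ a ∈ A n, ∀ b ∈ A n, a ≠ b →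
        ∃ k, 2*(β/8) < dist ((⇑g)^[k] a) ((⇑g)^[k] b) := by
      intro n
      induction n with
      | zero => intro a ha; simp [hA] at ha
      | succ n ih =>
        intro a ha b hb hne
        rw [hAsucc, Finset.mem_insert] at ha hb
        rcases ha with ha | ha <;> rcases hb with hb | hb
        · exact absurd (ha.trans hb.symm) hne
        · rw [ha]; exact hstep (A n) b hb
        · obtain ⟨k, hk⟩ := hstep (A n) a ha
          exact ⟨k, by rw [hb, dist_comm]; exact hk⟩
        · exact ih a ha b hb hne
    have hcardA : ∀ n, (A n).card = n := by
      intro n; induction n with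
      | zero => simp [hA]
      | succ n ih => rw [hAsucc, Finset.card_insert_of_notMem (hYnot n), ih]
    set K : X → X → ℕ := fun a b =>
      if h : ∃ k, 2*(β/8) < dist ((⇑g)^[k] a) ((⇑g)^[k] b) then h.choose else 0 with hK
    set S := A (M+1) with hS
    set m := S.sup (fun a => S.sup (K a)) with hm
    have hle : S.card ≤ M := by
      refine hbound m S ?_
      intro a ha b hb hne
      have hex : ∃ k, 2*(β/8) < dist ((⇑g)^[k] a) ((⇑g)^[k] b) := hsepA (M+1) a ha b hb hne
      refine ⟨K a b, ?_, ?_⟩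
      · calc K a b ≤ S.sup (K a) := Finset.le_sup hb
          _ ≤ m := Finset.le_sup (f := fun a => S.sup (K a)) ha
      · have : K a b = hex.choose := by rw [hK]; simp [dif_pos hex]
        rw [this]
        exact hex.choose_spec
    have h2 := hcardA (M+1)
    rw [hS] at hle
    omega
  obtain ⟨F, hF⟩ := hcover
  -- Baire category: one stable set has interior
  have hclosed : ∀ a : {a // a ∈ F}, IsClosed (Ws (⇑g) (2*(β/8)) a.1) := fun a =>
    isClosed_ws g.continuous _ _
  have hunion : (⋃ a : {a // a ∈ F}, Ws (⇑g) (2*(β/8)) a.1) = Set.univ := by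
    ext y
    simp only [Set.mem_iUnion, Set.mem_univ, iff_true]
    obtain ⟨a, ha, hy⟩ := hF y
    exact ⟨⟨a, ha⟩, hy⟩
  obtain ⟨a, ha⟩ := nonempty_interior_of_iUnion_of_closed hclosed hunion
  obtain ⟨u₀, hu₀⟩ := ha
  obtain ⟨r, hr, hball⟩ := Metric.isOpen_iff.mp isOpen_interior u₀ hu₀
  have hγ : (0:ℝ) < min (r/2) (β/2) := by positivity
  obtain ⟨z, τ, hτ1, hzd, hzs⟩ := reach_ws g hg x u₀ hγ
  have hzball : z ∈ ball u₀ r := by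
    have h1 : min (r/2) (β/2) ≤ r/2 := min_le_left _ _
    simp only [mem_ball]
    linarith [hzd]
  have hzW : z ∈ Ws (⇑g) (2*(β/8)) a.1 := interior_subset (hball hzball)
  -- all of the ball is mapped to x by g^[τ]
  have himg : ∀ u' ∈ ball u₀ r, (⇑g)^[τ] u' = x := by
    intro u' hu'
    have hu'W : u' ∈ Ws (⇑g) (2*(β/8)) a.1 := interior_subset (hball hu')
    refine hcol _ ?_
    intro k
    have hd1 : dist ((⇑g)^[τ+k] u') ((⇑g)^[τ+k] z) ≤ 4*(β/8) := by
      calc dist ((⇑g)^[τ+k] u') ((⇑g)^[τ+k] z)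
          ≤ dist ((⇑g)^[τ+k] u') ((⇑g)^[τ+k] a.1) + dist ((⇑g)^[τ+k] z) ((⇑g)^[τ+k] a.1) :=
            dist_triangle_right _ _ _
        _ ≤ 2*(β/8) + 2*(β/8) := add_le_add (hu'W _) (hzW _)
        _ = 4*(β/8) := by ring
    have hd2 : dist ((⇑g)^[k] ((⇑g)^[τ] z)) ((⇑g)^[k] x) ≤ min (r/2) (β/2) := hzs k
    rw [← Function.iterate_add_apply, Nat.add_comm k τ] at hd2
    have h3 : min (r/2) (β/2) ≤ β/2 := min_le_right _ _
    rw [← Function.iterate_add_apply, Nat.add_comm k τ]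
    have htri := dist_triangle ((⇑g)^[τ+k] u') ((⇑g)^[τ+k] z) ((⇑g)^[k] x)
    linarith
  have hmap : ∀ N : ℕ, IsOpenMap ((⇑g)^[N]) := by
    intro N
    induction N with
    | zero => simpa using IsOpenMap.id
    | succ n ih => rw [Function.iterate_succ]; exact ih.comp g.isOpenMap
  have himg' : (⇑g)^[τ] '' (ball u₀ r) = {x} := by
    apply Set.Subset.antisymm
    · rintro - ⟨u', hu', rfl⟩
      exact himg u' hu'
    · rintro y hy
      simp only [Set.mem_singleton_iff] at hy
      subst hy
      exact ⟨z, hzball, himg z hzball⟩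
  have hxopen : IsOpen ({x} : Set X) := by
    rw [← himg']
    exact hmap τ _ isOpen_ball
  exact no_isolated g hg x hxopen

lemma uncountable_ws [Infinite X] (g : X ≃ₜ X) (hg : GluingOrbit (⇑g))
    {ε : ℝ} (hε : 0 < ε) (x : X) : ¬ (Ws (⇑g) ε x).Countable := by
  classical
  have hpair : ∀ (q : {a : ℝ // 0 < a}) (y : X),
      ∃ y₁ y₂, y₁ ∈ Ws (⇑g) q.1 y ∧ y₂ ∈ Ws (⇑g) q.1 y ∧ y₁ ≠ y₂ :=
    fun q y => exists_pair g hg q.2 y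
  choose Y₁ Y₂ hY1 hY2 hYne using hpair
  set step : X × {a : ℝ // 0 < a} → Bool → X × {a : ℝ // 0 < a} := fun s b =>
    (if b then Y₁ s.2 s.1 else Y₂ s.2 s.1,
     ⟨min (s.2.1/2) (dist (Y₁ s.2 s.1) (Y₂ s.2 s.1) / 8), by
        have hd : 0 < dist (Y₁ s.2 s.1) (Y₂ s.2 s.1) := dist_pos.mpr (hYne s.2 s.1)
        have hs := s.2.2
        positivity⟩) with hstep
  set node : List Bool → X × {a : ℝ // 0 < a} :=
    fun w => w.foldr (fun b s => step s b) (x, ⟨ε/2, by positivity⟩) with hnode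
  have hnode_cons : ∀ (b : Bool) (w : List Bool), node (b :: w) = step (node w) b :=
    fun b w => rfl
  have hmem : ∀ (b : Bool) (w : List Bool),
      (node (b :: w)).1 ∈ Ws (⇑g) (node w).2.1 (node w).1 := by
    intro b w
    rw [hnode_cons]
    cases b
    · exact hY2 (node w).2 (node w).1
    · exact hY1 (node w).2 (node w).1
  have hhalf : ∀ (b : Bool) (w : List Bool), (node (b :: w)).2.1 ≤ (node w).2.1 / 2 := by
    intro b w; rw [hnode_cons]; exact min_le_left _ _
  have hheight : ∀ (b : Bool) (w : List Bool),
      (node (b :: w)).2.1 ≤ dist (Y₁ (node w).2 (node w).1) (Y₂ (node w).2 (node w).1) / 8 := by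
    intro b w; rw [hnode_cons]; exact min_le_right _ _
  set L : (ℕ → Bool) → ℕ → List Bool := fun σ n => Nat.rec [] (fun m l => σ m :: l) n with hL
  have hLsucc : ∀ σ n, L σ (n+1) = σ n :: L σ n := fun σ n => rfl
  set p : (ℕ → Bool) → ℕ → X := fun σ n => (node (L σ n)).1 with hp
  set al : (ℕ → Bool) → ℕ → ℝ := fun σ n => (node (L σ n)).2.1 with hal
  have hal0 : ∀ σ, al σ 0 = ε/2 := fun σ => rfl
  have hp0 : ∀ σ, p σ 0 = x := fun σ => rfl
  have halpos : ∀ σ n, 0 < al σ n := fun σ n => (node (L σ n)).2.2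
  have halsucc : ∀ σ n, al σ (n+1) ≤ al σ n / 2 := fun σ n => hhalf (σ n) (L σ n)
  have hstepdist : ∀ σ n k, dist ((⇑g)^[k] (p σ (n+1))) ((⇑g)^[k] (p σ n)) ≤ al σ n :=
    fun σ n k => hmem (σ n) (L σ n) k
  have hstepdist0 : ∀ σ n, dist (p σ n) (p σ (n+1)) ≤ al σ n := by
    intro σ n
    have h1 := hstepdist σ n 0
    simp only [Function.iterate_zero, id] at h1
    rwa [dist_comm]
  have halgeo : ∀ σ n, al σ n ≤ (ε/2) * (1/2)^n := by
    intro σ n; induction n with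
    | zero => simp [hal0]
    | succ n ih =>
      have h1 := halsucc σ n
      calc al σ (n+1) ≤ al σ n / 2 := h1
        _ ≤ ((ε/2) * (1/2)^n)/2 := by linarith
        _ = (ε/2) * (1/2)^(n+1) := by ring
  have hcauchy : ∀ σ, CauchySeq (p σ) := by
    intro σ
    refine cauchySeq_of_le_geometric (1/2) (ε/2) (by norm_num) (fun n => ?_)
    exact (hstepdist0 σ n).trans (halgeo σ n)
  choose Fp hFp using fun σ => cauchySeq_tendsto_of_complete (hcauchy σ)
  have htail : ∀ σ n k, dist (p σ n) (p σ (n+k)) + 2 * al σ (n+k) ≤ 2 * al σ n := by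
    intro σ n k
    induction k with
    | zero => simp
    | succ k ih =>
      have h1 := dist_triangle (p σ n) (p σ (n+k)) (p σ (n+k+1))
      have h2 := hstepdist0 σ (n+k)
      have h3 := halsucc σ (n+k)
      have hEq : n + (k+1) = (n+k)+1 := by omega
      rw [hEq]
      linarith
  have hlimdist : ∀ σ n, dist (Fp σ) (p σ n) ≤ 2 * al σ n := by
    intro σ n
    have hc : Tendsto (fun m => dist (p σ m) (p σ n)) atTop (𝓝 (dist (Fp σ) (p σ n))) :=
      (hFp σ).dist tendsto_const_nhds
    refine le_of_tendsto hc ?_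
    rw [Filter.eventually_atTop]
    refine ⟨n, fun m hm => ?_⟩
    have hk := htail σ n (m - n)
    rw [show n + (m - n) = m by omega] at hk
    have h4 := halpos σ m
    rw [dist_comm]
    linarith
  have hWs : ∀ σ, Fp σ ∈ Ws (⇑g) ε x := by
    intro σ k
    have hn : ∀ n, dist ((⇑g)^[k] (p σ n)) ((⇑g)^[k] x) + 2 * al σ n ≤ 2 * (ε/2) := by
      intro n; induction n with
      | zero =>
        rw [hp0, hal0]
        simp
      | succ n ih =>
        have h1 := hstepdist σ n k
        have h3 := halsucc σ n
        have htri := dist_triangle ((⇑g)^[k] (p σ (n+1))) ((⇑g)^[k] (p σ n)) ((⇑g)^[k] x)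
        linarith
    have hc : Tendsto (fun n => dist ((⇑g)^[k] (p σ n)) ((⇑g)^[k] x)) atTop
        (𝓝 (dist ((⇑g)^[k] (Fp σ)) ((⇑g)^[k] x))) :=
      (((g.continuous.iterate k).tendsto (Fp σ)).comp (hFp σ)).dist tendsto_const_nhds
    refine le_of_tendsto hc (Filter.Eventually.of_forall fun n => ?_)
    have h4 := halpos σ n
    have h5 := hn n
    linarith
  have hinj : Function.Injective Fp := by
    intro σ τ' heq
    by_contra hne
    have hex : ∃ n, σ n ≠ τ' n := by
      by_contra hall
      push_neg at hall
      exact hne (funext hall)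
    have hagree : ∀ i < Nat.find hex, σ i = τ' i := fun i hi =>
      not_not.mp (Nat.find_min hex hi)
    have hdiff : σ (Nat.find hex) ≠ τ' (Nat.find hex) := Nat.find_spec hex
    set n := Nat.find hex with hndef
    clear_value n
    have hLeq : ∀ m, (∀ i < m, σ i = τ' i) → L σ m = L τ' m := by
      intro m hm
      induction m with
      | zero => rfl
      | succ m ih =>
        rw [hLsucc, hLsucc, hm m (by omega), ih (fun i hi => hm i (by omega))]
    have hw : L τ' n = L σ n := (hLeq n hagree).symm
    have e2 : p τ' (n+1) = (node (τ' n :: L σ n)).1 := by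
      show (node (L τ' (n+1))).1 = _
      rw [show L τ' (n+1) = τ' n :: L σ n from by rw [hLsucc, hw]]
    have e2' : al τ' (n+1) = (node (τ' n :: L σ n)).2.1 := by
      show (node (L τ' (n+1))).2.1 = _
      rw [show L τ' (n+1) = τ' n :: L σ n from by rw [hLsucc, hw]]
    have hδpos : 0 < dist (Y₁ (node (L σ n)).2 (node (L σ n)).1)
        (Y₂ (node (L σ n)).2 (node (L σ n)).1) := dist_pos.mpr (hYne _ _)
    have hchild : dist (p σ (n+1)) (p τ' (n+1)) =
        dist (Y₁ (node (L σ n)).2 (node (L σ n)).1) (Y₂ (node (L σ n)).2 (node (L σ n)).1) := by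
      have e1 : p σ (n+1) = (node (σ n :: L σ n)).1 := rfl
      rw [e1, e2, hnode_cons, hnode_cons]
      cases hb : σ n <;> cases hb' : τ' n
      · exact absurd (by rw [hb, hb']) hdiff
      · show dist (Y₂ (node (L σ n)).2 (node (L σ n)).1) (Y₁ (node (L σ n)).2 (node (L σ n)).1) = _
        rw [dist_comm]
      · rfl
      · exact absurd (by rw [hb, hb']) hdiff
    have ha1 : al σ (n+1) ≤ dist (Y₁ (node (L σ n)).2 (node (L σ n)).1)
        (Y₂ (node (L σ n)).2 (node (L σ n)).1) / 8 := hheight (σ n) (L σ n)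
    have ha2 : al τ' (n+1) ≤ dist (Y₁ (node (L σ n)).2 (node (L σ n)).1)
        (Y₂ (node (L σ n)).2 (node (L σ n)).1) / 8 := by
      rw [e2']
      exact hheight (τ' n) (L σ n)
    have hl1 := hlimdist σ (n+1)
    have hl2 := hlimdist τ' (n+1)
    rw [heq] at hl1
    have htri := dist_triangle (p σ (n+1)) (Fp τ') (p τ' (n+1))
    rw [hchild] at htri
    have c1 : dist (p σ (n+1)) (Fp τ') = dist (Fp τ') (p σ (n+1)) := dist_comm _ _
    linarith
  intro hcnt
  haveI hC : Countable (Ws (⇑g) ε x) := hcnt.to_subtype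
  have hinj' : Function.Injective (fun σ : ℕ → Bool => (⟨Fp σ, hWs σ⟩ : Ws (⇑g) ε x)) := by
    intro a b h
    exact hinj (congrArg Subtype.val h)
  haveI hcb : Countable (ℕ → Bool) := hinj'.countable
  haveI : Countable (Set ℕ) := by
    have hinj2 : Function.Injective (fun s : Set ℕ => fun n => decide (n ∈ s)) := by
      intro s t h
      ext n
      have h3 := congrFun h n
      simpa [decide_eq_decide] using h3
    exact hinj2.countable
  obtain ⟨f, hf⟩ := Countable.exists_injective_nat (Set ℕ)
  exact Function.cantor_injective f hf

lemma perfect_in_ws [Infinite X] (g : X ≃ₜ X) (hg : GluingOrbit (⇑g))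
    {ε : ℝ} (hε : 0 < ε) (x : X) :
    ∃ C : Set X, C.Nonempty ∧ IsCompact C ∧ Perfect C ∧ C ⊆ Ws (⇑g) ε x := by
  obtain ⟨D, hDp, hDne, hDsub⟩ := exists_perfect_nonempty_of_isClosed_of_not_countable
    (isClosed_ws g.continuous ε x) (uncountable_ws g hg hε x)
  exact ⟨D, hDne, hDp.closed.isCompact, hDp, hDsub⟩

lemma gluingOrbit_symm (g : X ≃ₜ X) (hg : GluingOrbit (⇑g)) : GluingOrbit (⇑g.symm) := by
  classical
  intro ε hε
  obtain ⟨M, hM⟩ := hg ε hε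
  refine ⟨M, fun c => ?_⟩
  set m : ℕ → ℕ := fun j => (c j).2 with hm
  set xx : ℕ → X := fun j => (c j).1 with hxx
  set cc : ℕ → ℕ → X × ℕ :=
    fun n j => if j ≤ n then ((⇑g.symm)^[m (n - j)] (xx (n - j)), m (n - j)) else (xx 0, 0) with hcc
  choose τ hτ hex using fun n => hM (cc n)
  choose w hw using hex
  have hM1 : 1 ≤ M := le_trans (hτ 0 0).1 (hτ 0 0).2
  set t' : ℕ → ℕ → ℕ := fun n i => if i < n then τ n (n - 1 - i) else 1 with ht'
  have ht'Icc : ∀ n i, t' n i ∈ Finset.Icc 1 M := by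
    intro n i
    rw [Finset.mem_Icc, ht']
    by_cases h : i < n
    · simp only [if_pos h]
      exact ⟨(hτ n _).1, (hτ n _).2⟩
    · simp only [if_neg h]
      exact ⟨le_refl 1, hM1⟩
  set T : ℕ → ℕ := fun n => (∑ i ∈ Finset.range n, (m (n - i) + τ n i)) + m 0 with hT
  set z : ℕ → X := fun n => (⇑g)^[T n] (w n) with hz
  have harith : ∀ n j, j ≤ n →
      (∑ i ∈ Finset.range j, (m i + t' n i))
        + (∑ i ∈ Finset.range (n - j), (m (n - i) + τ n i)) + m j = T n := by
    intro n j hj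
    induction j with
    | zero => simp [hT]
    | succ j ih =>
      have hj' : j ≤ n := by omega
      have ihe := ih hj'
      have hsplit : (∑ i ∈ Finset.range (n - j), (m (n - i) + τ n i))
          = (∑ i ∈ Finset.range (n - (j+1)), (m (n - i) + τ n i))
            + (m (j+1) + τ n (n - (j+1))) := by
        have h1 : n - j = (n - (j+1)) + 1 := by omega
        rw [h1, Finset.sum_range_succ]
        have h2 : n - (n - (j+1)) = j + 1 := by omega
        rw [h2]
      rw [hsplit] at ihe
      rw [Finset.sum_range_succ]
      have ht'j : t' n j = τ n (n - 1 - j) := by rw [ht']; simp [show j < n by omega]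
      have hidx : n - 1 - j = n - (j+1) := by omega
      rw [ht'j, hidx]
      omega
  have htrace : ∀ n j l, j ≤ n → l ≤ m j →
      dist ((⇑g.symm)^[(∑ i ∈ Finset.range j, (m i + t' n i)) + l] (z n))
        ((⇑g.symm)^[l] (xx j)) ≤ ε := by
    intro n j l hj hl
    have hpiece : (cc n (n - j)).2 = m j := by
      simp only [hcc, if_pos (Nat.sub_le n j)]
      rw [show n - (n - j) = j by omega]
    have h0 := hw n (n - j) (m j - l) (by rw [hpiece]; omega)
    have hsum : (∑ i ∈ Finset.range (n - j), ((cc n i).2 + τ n i))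
        = ∑ i ∈ Finset.range (n - j), (m (n - i) + τ n i) := by
      refine Finset.sum_congr rfl (fun i hi => ?_)
      have hi' : i ≤ n := by
        have := Finset.mem_range.mp hi
        omega
      simp only [hcc, if_pos hi']
    rw [hsum] at h0
    have hAB : T n = ((∑ i ∈ Finset.range j, (m i + t' n i)) + l)
        + ((∑ i ∈ Finset.range (n - j), (m (n - i) + τ n i)) + (m j - l)) := by
      have h1 := harith n j hj
      omega
    have hfirst : (⇑g.symm)^[(∑ i ∈ Finset.range j, (m i + t' n i)) + l] (z n)
        = (⇑g)^[(∑ i ∈ Finset.range (n - j), (m (n - i) + τ n i)) + (m j - l)] (w n) := by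
      show (⇑g.symm)^[(∑ i ∈ Finset.range j, (m i + t' n i)) + l] ((⇑g)^[T n] (w n)) = _
      rw [hAB]
      exact iterate_cancel_iterate (fun y => g.symm_apply_apply y) _ _ _
    have hc1 : (cc n (n - j)).1 = (⇑g.symm)^[m j] (xx j) := by
      simp only [hcc, if_pos (Nat.sub_le n j)]
      rw [show n - (n - j) = j by omega]
    have hsecond : (⇑g)^[m j - l] ((cc n (n - j)).1) = (⇑g.symm)^[l] (xx j) := by
      have hmm : (⇑g.symm)^[m j] (xx j) = (⇑g.symm)^[(m j - l) + l] (xx j) := by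
        rw [show (m j - l) + l = m j by omega]
      rw [hc1, hmm]
      exact iterate_cancel_iterate (fun y => g.apply_symm_apply y) _ _ _
    rw [hfirst, ← hsecond]
    exact h0
  obtain ⟨𝒰, h𝒰⟩ : ∃ 𝒰 : Ultrafilter ℕ, (𝒰 : Filter ℕ) ≤ atTop :=
    ⟨Ultrafilter.of atTop, Ultrafilter.of_le _⟩
  have hval : ∀ i, ∃ v ∈ Finset.Icc 1 M, {n | t' n i = v} ∈ 𝒰 := fun i =>
    ultra_const_val 𝒰 (v := fun n => t' n i) (fun n => ht'Icc n i)
  choose v hvIcc hvmem using hval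
  obtain ⟨q, hq⟩ := ultra_limit 𝒰 z
  refine ⟨v, fun j => Finset.mem_Icc.mp (hvIcc j), ⟨q, ?_⟩⟩
  intro j l hl
  refine ultra_mem_closed hq
    (A := {y | dist ((⇑g.symm)^[(∑ i ∈ Finset.range j, ((c i).2 + v i)) + l] y)
      ((⇑g.symm)^[l] (c j).1) ≤ ε}) ?_ ?_
  · exact isClosed_le ((g.symm.continuous.iterate _).dist continuous_const) continuous_const
  · have hjset : {n | j ≤ n} ∈ (𝒰 : Filter ℕ) := h𝒰 (Filter.mem_atTop j)
    have hvs : (⋂ i ∈ (↑(Finset.range j) : Set ℕ), {n | t' n i = v i}) ∈ (𝒰 : Filter ℕ) :=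
      (Filter.biInter_mem (Finset.range j).finite_toSet).mpr (fun i _ => hvmem i)
    filter_upwards [hjset, hvs] with n hn hvn
    have hsumeq : (∑ i ∈ Finset.range j, ((c i).2 + v i))
        = ∑ i ∈ Finset.range j, (m i + t' n i) := by
      refine Finset.sum_congr rfl (fun i hi => ?_)
      have hti : t' n i = v i := by
        have h5 := Set.mem_iInter₂.mp hvn i (by exact_mod_cast hi)
        exact h5
      have hci : (c i).2 = m i := rfl
      rw [hci, hti]
    show dist ((⇑g.symm)^[(∑ i ∈ Finset.range j, ((c i).2 + v i)) + l] (z n))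
      ((⇑g.symm)^[l] (c j).1) ≤ ε
    rw [hsumeq]
    exact htrace n j l hn hl

end Main

/-- **Theorem B.** If `f : X → X` is a homeomorphism of an infinite compact metric space
satisfying the gluing-orbit property, then there is `ε₀ > 0` such that for each
`ε ∈ (0, ε₀)` and each `x ∈ X` there are nonempty compact perfect sets
`C ⊆ W^s_ε(x)` and `D ⊆ W^u_ε(x)`. -/
theorem stmt0 [MetricSpace X] [CompactSpace X] [Infinite X] (f : X ≃ₜ X)
    (hf : GluingOrbit (f : X → X)) :
    ∃ ε₀ : ℝ, 0 < ε₀ ∧ ∀ ε : ℝ, 0 < ε → ε < ε₀ → ∀ x : X,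
      (∃ C : Set X, C.Nonempty ∧ IsCompact C ∧ Perfect C ∧ C ⊆ Ws (f : X → X) ε x) ∧
      (∃ D : Set X, D.Nonempty ∧ IsCompact D ∧ Perfect D ∧ D ⊆ Wu f ε x) := by
  refine ⟨1, one_pos, fun ε hε _ x => ?_⟩
  constructor
  · exact perfect_in_ws f hf hε x
  · exact perfect_in_ws f.symm (gluingOrbit_symm f hf) hε x
end

section
/- Let $X$ be an infinite compact metric space and $f: X \to X$ a homeomorphism satisfying the gluing-orbit property. Then $f$ is not positively countably expansive, i.e., for every $\varepsilon > 0$ there exists $x \in X$ such that $W^s_\varepsilon(x)$ is uncountable. -/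
open Function Metric Filter

variable {X : Type*}

set_option linter.unusedSectionVars false

open Topology

namespace GluingAux

noncomputable def node [MetricSpace X] (F G : X → ℝ → X) (x₀ : X) (ε : ℝ) : List Bool → X × ℝ
  | [] => (x₀, ε / 2)
  | b :: s =>
    (cond b (G (node F G x₀ ε s).1 ((node F G x₀ ε s).2 / 4))
            (F (node F G x₀ ε s).1 ((node F G x₀ ε s).2 / 4)),
      min ((node F G x₀ ε s).2 / 4)
        (dist (F (node F G x₀ ε s).1 ((node F G x₀ ε s).2 / 4))
              (G (node F G x₀ ε s).1 ((node F G x₀ ε s).2 / 4)) / 8))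

def pre (a : ℕ → Bool) : ℕ → List Bool
  | 0 => []
  | n + 1 => a n :: pre a n

lemma pre_eq {a b : ℕ → Bool} : ∀ n, (∀ i < n, a i = b i) → pre a n = pre b n := by
  intro n
  induction n with
  | zero => intro _; rfl
  | succ n ih =>
      intro h
      simp only [pre, ih (fun i hi => h i (Nat.lt_succ_of_lt hi)), h n (Nat.lt_succ_self n)]

section

variable [MetricSpace X] {f : X → X} {F G : X → ℝ → X} {x₀ : X} {ε : ℝ}

variable (hFG : ∀ (u : X) (δ : ℝ), 0 < δ → (F u δ ≠ G u δ ∧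
      (∀ k, dist (f^[k] (F u δ)) (f^[k] u) ≤ δ) ∧ (∀ k, dist (f^[k] (G u δ)) (f^[k] u) ≤ δ)))
variable (hε : 0 < ε)

include hFG hε

lemma node_pos : ∀ s : List Bool, 0 < (node F G x₀ ε s).2 := by
  intro s
  induction s with
  | nil => simpa [node] using half_pos hε
  | cons b s ih =>
      have h4 : 0 < (node F G x₀ ε s).2 / 4 := by linarith
      have hne := (hFG (node F G x₀ ε s).1 _ h4).1
      have hd := dist_pos.mpr hne
      simp only [node]
      exact lt_min (by linarith) (by linarith)

lemma node_step : ∀ (s : List Bool) (b : Bool) (k : ℕ),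
    dist (f^[k] ((node F G x₀ ε (b :: s)).1)) (f^[k] ((node F G x₀ ε s).1))
      ≤ (node F G x₀ ε s).2 / 4 := by
  intro s b k
  have h4 : 0 < (node F G x₀ ε s).2 / 4 := by have := node_pos (x₀ := x₀) hFG hε s; linarith
  obtain ⟨-, h0, h1⟩ := hFG (node F G x₀ ε s).1 _ h4
  cases b <;> simpa [node] using (by first | exact h0 k | exact h1 k)

omit hFG hε in
lemma node_beta_cons (s : List Bool) (b : Bool) :
    (node F G x₀ ε (b :: s)).2 ≤ (node F G x₀ ε s).2 / 4 := by
  simp only [node]; exact min_le_left _ _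

omit hFG hε in
lemma node_beta_sep (s : List Bool) (b : Bool) :
    (node F G x₀ ε (b :: s)).2
      ≤ dist ((node F G x₀ ε (false :: s)).1) ((node F G x₀ ε (true :: s)).1) / 8 := by
  simp only [node]; exact min_le_right _ _

lemma node_beta_pow (a : ℕ → Bool) (n : ℕ) : ∀ m : ℕ,
    (node F G x₀ ε (pre a (n + m))).2 ≤ (node F G x₀ ε (pre a n)).2 * (1/4 : ℝ) ^ m := by
  intro m
  induction m with
  | zero => simp
  | succ m ih =>
      have h1 : n + (m + 1) = (n + m) + 1 := by ring
      rw [h1]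
      have h2 := node_beta_cons (F := F) (G := G) (x₀ := x₀) (ε := ε) (pre a (n+m)) (a (n+m))
      calc (node F G x₀ ε (a (n+m) :: pre a (n+m))).2 ≤ (node F G x₀ ε (pre a (n+m))).2 / 4 := h2
        _ ≤ (node F G x₀ ε (pre a n)).2 * (1/4:ℝ)^m / 4 := by linarith
        _ = (node F G x₀ ε (pre a n)).2 * (1/4:ℝ)^(m+1) := by ring

lemma node_chain (a : ℕ → Bool) (n : ℕ) (k : ℕ) : ∀ m : ℕ,
    dist (f^[k] ((node F G x₀ ε (pre a (n + m))).1)) (f^[k] ((node F G x₀ ε (pre a n)).1))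
      ≤ (node F G x₀ ε (pre a n)).2 * (1 - (1/4 : ℝ) ^ m) / 3 := by
  intro m
  induction m with
  | zero => simp
  | succ m ih =>
      have hb := node_beta_pow (x₀ := x₀) hFG hε a n m
      have hbn := (node_pos (x₀ := x₀) hFG hε (pre a n)).le
      have h1 : n + (m + 1) = (n + m) + 1 := by ring
      rw [h1]
      have hs := node_step (x₀ := x₀) hFG hε (pre a (n+m)) (a (n+m)) k
      calc dist (f^[k] ((node F G x₀ ε (a (n+m) :: pre a (n+m))).1))
            (f^[k] ((node F G x₀ ε (pre a n)).1))
          ≤ dist (f^[k] ((node F G x₀ ε (a (n+m) :: pre a (n+m))).1))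
              (f^[k] ((node F G x₀ ε (pre a (n+m))).1))
            + dist (f^[k] ((node F G x₀ ε (pre a (n+m))).1))
              (f^[k] ((node F G x₀ ε (pre a n)).1)) := dist_triangle _ _ _
        _ ≤ (node F G x₀ ε (pre a (n+m))).2 / 4
            + (node F G x₀ ε (pre a n)).2 * (1 - (1/4:ℝ)^m) / 3 := by
              exact add_le_add hs ih
        _ ≤ (node F G x₀ ε (pre a n)).2 * (1/4:ℝ)^m / 4
            + (node F G x₀ ε (pre a n)).2 * (1 - (1/4:ℝ)^m) / 3 := by linarith
        _ = (node F G x₀ ε (pre a n)).2 * (1 - (1/4:ℝ)^(m+1)) / 3 := by ring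

lemma node_chain' (a : ℕ → Bool) (n : ℕ) (k m : ℕ) :
    dist (f^[k] ((node F G x₀ ε (pre a (n + m))).1)) (f^[k] ((node F G x₀ ε (pre a n)).1))
      ≤ (node F G x₀ ε (pre a n)).2 / 3 := by
  have h := node_chain (x₀ := x₀) hFG hε a n k m
  have hbn := (node_pos (x₀ := x₀) hFG hε (pre a n)).le
  have hp : (0:ℝ) ≤ (1/4:ℝ)^m := by positivity
  nlinarith

end

end GluingAux

open GluingAux

theorem notCountable_nat_bool : ¬ Countable (ℕ → Bool) := by
  intro h
  obtain ⟨g, hg⟩ := exists_surjective_nat (ℕ → Bool)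
  obtain ⟨n, hn⟩ := hg (fun k => !(g k k))
  have := congrFun hn n
  simp at this

theorem cantor [MetricSpace X] [CompactSpace X] {f : X → X} (hfc : Continuous f)
    {ε : ℝ} (hε : 0 < ε) (x₀ : X)
    (hB : ∀ (u : X) (δ : ℝ), 0 < δ → ∃ y₀ y₁ : X, y₀ ≠ y₁ ∧
      (∀ k, dist (f^[k] y₀) (f^[k] u) ≤ δ) ∧ (∀ k, dist (f^[k] y₁) (f^[k] u) ≤ δ)) :
    ¬ (Ws f ε x₀).Countable := by
  classical
  -- extract choice functions
  have hB' : ∀ (u : X) (δ : ℝ), ∃ y₀ y₁ : X, 0 < δ → (y₀ ≠ y₁ ∧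
      (∀ k, dist (f^[k] y₀) (f^[k] u) ≤ δ) ∧ (∀ k, dist (f^[k] y₁) (f^[k] u) ≤ δ)) := by
    intro u δ
    by_cases h : 0 < δ
    · obtain ⟨a, b, h1, h2, h3⟩ := hB u δ h
      exact ⟨a, b, fun _ => ⟨h1, h2, h3⟩⟩
    · exact ⟨x₀, x₀, fun h' => absurd h' h⟩
  choose F G hFG using hB'
  have hFG' : ∀ (u : X) (δ : ℝ), 0 < δ → (F u δ ≠ G u δ ∧
      (∀ k, dist (f^[k] (F u δ)) (f^[k] u) ≤ δ) ∧
      (∀ k, dist (f^[k] (G u δ)) (f^[k] u) ≤ δ)) := fun u δ h => hFG u δ h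
  -- limits along branches
  have key : ∀ a : ℕ → Bool, ∃ y : X, ∀ n k,
      dist (f^[k] y) (f^[k] ((node F G x₀ ε (pre a n)).1)) ≤ (node F G x₀ ε (pre a n)).2 / 3 := by
    intro a
    set u : ℕ → X := fun n => (node F G x₀ ε (pre a n)).1 with hu
    have hcauchy : CauchySeq u := by
      apply cauchySeq_of_le_geometric (1/4 : ℝ) (ε/8) (by norm_num)
      intro n
      have h1 := node_step (x₀ := x₀) hFG' hε (pre a n) (a n) 0
      have h2 := node_beta_pow (x₀ := x₀) hFG' hε a 0 n
      simp only [Function.iterate_zero_apply] at h1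
      have h0 : (node F G x₀ ε (pre a 0)).2 = ε / 2 := by simp [pre, node]
      rw [Nat.zero_add, h0] at h2
      have : dist (u n) (u (n+1)) = dist ((node F G x₀ ε (a n :: pre a n)).1)
          ((node F G x₀ ε (pre a n)).1) := by
        rw [dist_comm]; rfl
      rw [this]
      calc dist ((node F G x₀ ε (a n :: pre a n)).1) ((node F G x₀ ε (pre a n)).1)
          ≤ (node F G x₀ ε (pre a n)).2 / 4 := h1
        _ ≤ ε/2 * (1/4:ℝ)^n / 4 := by linarith
        _ = ε/8 * (1/4:ℝ)^n := by ring
    obtain ⟨y, hy⟩ := cauchySeq_tendsto_of_complete hcauchy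
    refine ⟨y, fun n k => ?_⟩
    have htd : Tendsto (fun m => f^[k] (u m)) atTop (𝓝 (f^[k] y)) :=
      ((hfc.iterate k).continuousAt.tendsto).comp hy
    have htd2 : Tendsto (fun m => dist (f^[k] (u m)) (f^[k] (u n))) atTop
        (𝓝 (dist (f^[k] y) (f^[k] (u n)))) := htd.dist tendsto_const_nhds
    apply le_of_tendsto htd2
    filter_upwards [eventually_ge_atTop n] with m hm
    have := node_chain' (x₀ := x₀) hFG' hε a n k (m - n)
    rwa [Nat.add_sub_cancel' hm] at this
  choose Y hY using key
  intro hcnt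
  -- range Y ⊆ Ws f ε x₀
  have hmem : ∀ a, Y a ∈ Ws f ε x₀ := by
    intro a k
    have := hY a 0 k
    simp only [pre, node] at this
    calc dist (f^[k] (Y a)) (f^[k] x₀) ≤ ε / 2 / 3 := this
      _ ≤ ε := by linarith
  -- injectivity
  have hinj : Function.Injective Y := by
    intro a b hab
    by_contra hne
    have hex : ∃ n, a n ≠ b n := by
      by_contra h
      push_neg at h
      exact hne (funext h)
    set n := Nat.find hex with hn
    have hdiff : a n ≠ b n := Nat.find_spec hex
    have hpre : pre b n = pre a n := (pre_eq n (fun i hi => by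
      have := Nat.find_min hex hi
      simpa using this)).symm
    set s := pre a n with hs
    have hb4 : 0 < (node F G x₀ ε s).2 / 4 := by
      have := node_pos (x₀ := x₀) hFG' hε s; linarith
    have hnechild : (node F G x₀ ε (false :: s)).1 ≠ (node F G x₀ ε (true :: s)).1 := by
      have := (hFG' (node F G x₀ ε s).1 _ hb4).1
      simpa [node] using this
    set d₀ := dist ((node F G x₀ ε (false :: s)).1) ((node F G x₀ ε (true :: s)).1) with hd₀
    have hd₀pos : 0 < d₀ := dist_pos.mpr hnechild
    -- child distance bounds
    have hbnda : dist (Y a) ((node F G x₀ ε (pre a (n+1))).1) ≤ d₀ / 24 := by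
      have h1 := hY a (n+1) 0
      simp only [Function.iterate_zero_apply] at h1
      have h2 : (node F G x₀ ε (pre a (n+1))).2 ≤ d₀ / 8 := by
        have := node_beta_sep (F := F) (G := G) (x₀ := x₀) (ε := ε) s (a n)
        simpa [pre, ← hs] using this
      linarith
    have hbndb : dist (Y b) ((node F G x₀ ε (pre b (n+1))).1) ≤ d₀ / 24 := by
      have h1 := hY b (n+1) 0
      simp only [Function.iterate_zero_apply] at h1
      have h2 : (node F G x₀ ε (pre b (n+1))).2 ≤ d₀ / 8 := by
        have := node_beta_sep (F := F) (G := G) (x₀ := x₀) (ε := ε) s (b n)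
        simpa [pre, hpre] using this
      linarith
    have hchild : dist ((node F G x₀ ε (pre a (n+1))).1) ((node F G x₀ ε (pre b (n+1))).1) = d₀ := by
      have hpa : pre a (n+1) = a n :: s := by simp [pre, hs]
      have hpb : pre b (n+1) = b n :: s := by simp [pre, hpre]
      rw [hpa, hpb]
      cases ha : a n <;> cases hb : b n
      · exact absurd (ha.trans hb.symm) hdiff
      · rfl
      · exact dist_comm _ _
      · exact absurd (ha.trans hb.symm) hdiff
    rw [hab] at hbnda
    have htri := dist_triangle ((node F G x₀ ε (pre a (n+1))).1) (Y b) ((node F G x₀ ε (pre b (n+1))).1)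
    rw [hchild, dist_comm ((node F G x₀ ε (pre a (n+1))).1) (Y b)] at htri
    linarith
  -- contradiction with countability
  have : Countable (ℕ → Bool) := by
    have h1 : (Set.range Y).Countable := hcnt.mono (Set.range_subset_iff.mpr hmem)
    have h2 := h1.to_subtype
    exact Countable.of_equiv _ (Equiv.ofInjective Y hinj).symm
  exact notCountable_nat_bool this


theorem lemA [MetricSpace X] [CompactSpace X] (f : X ≃ₜ X)
    (hf : GluingOrbit (f : X → X)) {δ : ℝ} (hδ : 0 < δ) :
    ∃ M : ℕ, ∀ (u v : X) (n : ℕ), ∃ t : ℕ, 1 ≤ t ∧ t ≤ M ∧ ∃ y : X,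
      (∀ k, dist ((f : X → X)^[k] y) ((f : X → X)^[k] u) ≤ δ) ∧
      (∀ l ≤ n, dist ((f : X → X)^[l] ((f.symm : X → X)^[n+t] y)) ((f : X → X)^[l] v) ≤ δ) := by
  classical
  obtain ⟨M, hM⟩ := hf δ hδ
  refine ⟨M, fun u v n => ?_⟩
  set F : X → X := (f : X → X) with hF
  set c : ℕ → ℕ → X × ℕ := fun m j => if j = 0 then (v, n) else (u, m) with hc
  choose T hT Z hZ using fun m => hM (c m)
  set τ : ℕ → ℕ := fun m => T m 0 with hτ
  have hτbd : ∀ m, τ m < M + 1 := fun m => Nat.lt_succ_of_le (hT m 0).2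
  obtain ⟨b, hbfib⟩ := Finite.exists_infinite_fiber (fun m => (⟨τ m, hτbd m⟩ : Fin (M+1)))
  set S : Set ℕ := {m | τ m = b.val} with hS
  have hSinf : S.Infinite := by
    rw [← Set.infinite_coe_iff]
    exact Infinite.of_injective
      (fun p : ((fun m => (⟨τ m, hτbd m⟩ : Fin (M+1))) ⁻¹' {b}) =>
        (⟨p.1, by
          have hp := p.2
          simp only [Set.mem_preimage, Set.mem_singleton_iff] at hp
          exact congrArg Fin.val hp⟩ : S))
      (fun p q h => Subtype.ext (by simpa using congrArg Subtype.val h))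
  obtain ⟨m₀, hm₀⟩ := hSinf.nonempty
  have ht1 : 1 ≤ b.val := by rw [← hm₀]; exact (hT m₀ 0).1
  have ht2 : b.val ≤ M := by rw [← hm₀]; exact (hT m₀ 0).2
  set Y : ℕ → X := fun m => F^[n + b.val] (Z m) with hY
  -- block facts
  have hfwd : ∀ m ∈ S, ∀ l ≤ m, dist (F^[l] (Y m)) (F^[l] u) ≤ δ := by
    intro m hm l hl
    have := hZ m 1 l (by simpa [hc] using hl)
    have hmm : T m 0 = b.val := hm
    have hsum : (∑ i ∈ Finset.range 1, ((c m i).2 + T m i)) = n + b.val := by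
      simp [hc, hmm]
    rw [hsum] at this
    simp only [hc, if_neg one_ne_zero] at this
    rwa [add_comm (n + b.val) l, iterate_add_apply] at this
  have hbwd : ∀ m ∈ S, ∀ l ≤ n,
      dist (F^[l] ((f.symm : X → X)^[n + b.val] (Y m))) (F^[l] v) ≤ δ := by
    intro m hm l hl
    have hz : (f.symm : X → X)^[n + b.val] (Y m) = Z m := by
      have : Function.LeftInverse (f.symm : X → X) F := f.symm_apply_apply
      exact this.iterate (n + b.val) (Z m)
    rw [hz]
    have := hZ m 0 l (by simp [hc]; omega)
    simpa [hc] using this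
  -- cluster point
  set V : ℕ → Set X := fun N => closure (Y '' {m | m ∈ S ∧ N ≤ m}) with hV
  have hVmono : ∀ N, V (N+1) ⊆ V N := by
    intro N
    apply closure_mono
    apply Set.image_mono
    intro m hm
    exact ⟨hm.1, le_trans (Nat.le_succ N) hm.2⟩
  have hVne : ∀ N, (V N).Nonempty := by
    intro N
    obtain ⟨m, hmS, hmN⟩ := hSinf.exists_gt N
    exact ⟨Y m, subset_closure ⟨m, ⟨hmS, hmN.le⟩, rfl⟩⟩
  have hVcl : ∀ N, IsClosed (V N) := fun N => isClosed_closure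
  have hVcp : IsCompact (V 0) := (hVcl 0).isCompact
  obtain ⟨y, hy⟩ := IsCompact.nonempty_iInter_of_sequence_nonempty_isCompact_isClosed V hVmono hVne hVcp hVcl
  have hymem : ∀ N, y ∈ V N := fun N => Set.mem_iInter.mp hy N
  refine ⟨b.val, ht1, ht2, y, ?_, ?_⟩
  · intro k
    have hcl : IsClosed {w : X | dist (F^[k] w) (F^[k] u) ≤ δ} :=
      isClosed_le (((f.continuous).iterate k).dist continuous_const) continuous_const
    have hsub : V k ⊆ {w : X | dist (F^[k] w) (F^[k] u) ≤ δ} := by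
      apply closure_minimal _ hcl
      rintro - ⟨m, ⟨hmS, hmk⟩, rfl⟩
      exact hfwd m hmS k hmk
    exact hsub (hymem k)
  · intro l hl
    have hcont : Continuous fun w : X => F^[l] ((f.symm : X → X)^[n + b.val] w) :=
      ((f.continuous).iterate l).comp ((f.symm.continuous).iterate (n + b.val))
    have hcl : IsClosed {w : X | dist (F^[l] ((f.symm : X → X)^[n + b.val] w)) (F^[l] v) ≤ δ} :=
      isClosed_le (hcont.dist continuous_const) continuous_const
    have hsub : V 0 ⊆ {w : X | dist (F^[l] ((f.symm : X → X)^[n + b.val] w)) (F^[l] v) ≤ δ} := by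
      apply closure_minimal _ hcl
      rintro - ⟨m, ⟨hmS, -⟩, rfl⟩
      exact hbwd m hmS l hl
    exact hsub (hymem 0)


-- separated tuples from non-covering
theorem exists_sep_tuple [MetricSpace X] {F : X → X} {ε : ℝ}
    (h : ∀ (K : ℕ) (w : Fin K → X), ∃ x : X, ∀ i, ∃ k, ε < dist (F^[k] x) (F^[k] (w i))) :
    ∀ K : ℕ, ∃ v : Fin K → X, ∀ i j, i ≠ j → ∃ l, ε < dist (F^[l] (v i)) (F^[l] (v j)) := by
  intro K
  induction K with
  | zero => exact ⟨fun i => i.elim0, fun i => i.elim0⟩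
  | succ K ih =>
      obtain ⟨v, hv⟩ := ih
      obtain ⟨x, hx⟩ := h K v
      refine ⟨Fin.snoc v x, fun i j hij => ?_⟩
      rcases Fin.eq_castSucc_or_eq_last i with ⟨i', rfl⟩ | rfl <;>
        rcases Fin.eq_castSucc_or_eq_last j with ⟨j', rfl⟩ | rfl
      · have hij' : i' ≠ j' := fun h => hij (by rw [h])
        obtain ⟨l, hl⟩ := hv i' j' hij'
        exact ⟨l, by simpa [Fin.snoc_castSucc] using hl⟩
      · obtain ⟨k, hk⟩ := hx i'
        exact ⟨k, by simpa [Fin.snoc_castSucc, Fin.snoc_last, dist_comm] using hk⟩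
      · obtain ⟨k, hk⟩ := hx j'
        exact ⟨k, by simpa [Fin.snoc_castSucc, Fin.snoc_last] using hk⟩
      · exact absurd rfl hij

theorem lemB [MetricSpace X] [CompactSpace X] (f : X ≃ₜ X)
    (hf : GluingOrbit (f : X → X)) {ε : ℝ} (hε : 0 < ε)
    (hsep : ∀ K : ℕ, ∃ v : Fin K → X, ∀ i j, i ≠ j →
      ∃ l, ε < dist ((f : X → X)^[l] (v i)) ((f : X → X)^[l] (v j))) :
    ∀ (u : X) (δ : ℝ), 0 < δ → ∃ y₀ y₁ : X, y₀ ≠ y₁ ∧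
      (∀ k, dist ((f : X → X)^[k] y₀) ((f : X → X)^[k] u) ≤ δ) ∧
      (∀ k, dist ((f : X → X)^[k] y₁) ((f : X → X)^[k] u) ≤ δ) := by
  classical
  intro u δ hδ
  set δ' : ℝ := min δ (ε/3) with hδ'def
  have hδ'pos : 0 < δ' := lt_min hδ (by linarith)
  have hδ'le : δ' ≤ δ := min_le_left _ _
  have hδ'le3 : δ' ≤ ε/3 := min_le_right _ _
  obtain ⟨M, hM⟩ := lemA f hf hδ'pos
  obtain ⟨v, hv⟩ := hsep (M+1)
  choose lw hlw using hv
  set n : ℕ := Finset.sup Finset.univ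
    (fun p : Fin (M+1) × Fin (M+1) => if h : p.1 ≠ p.2 then lw p.1 p.2 h else 0) with hn
  have hlwn : ∀ (i j : Fin (M+1)) (h : i ≠ j), lw i j h ≤ n := by
    intro i j h
    have h1 : (if h' : (i,j).1 ≠ (i,j).2 then lw (i,j).1 (i,j).2 h' else 0) = lw i j h := by
      simp only [dif_pos (show (i,j).1 ≠ (i,j).2 from h)]
    rw [hn, ← h1]
    exact Finset.le_sup (f := fun p : Fin (M+1) × Fin (M+1) =>
      if h : p.1 ≠ p.2 then lw p.1 p.2 h else 0) (Finset.mem_univ (i, j))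
  choose t ht1 ht2 y hy1 hy2 using fun i : Fin (M+1) => hM u (v i) n
  -- pigeonhole on t
  have hmap : ∀ i ∈ (Finset.univ : Finset (Fin (M+1))), t i ∈ Finset.Icc 1 M :=
    fun i _ => Finset.mem_Icc.mpr ⟨ht1 i, ht2 i⟩
  have hcard : (Finset.Icc 1 M).card < (Finset.univ : Finset (Fin (M+1))).card := by
    simp [Nat.card_Icc]
  obtain ⟨i, -, j, -, hij, htij⟩ := Finset.exists_ne_map_eq_of_card_lt_of_maps_to hcard hmap
  refine ⟨y i, y j, ?_, fun k => le_trans (hy1 i k) hδ'le, fun k => le_trans (hy1 j k) hδ'le⟩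
  intro heq
  set l₀ := lw i j hij with hl₀def
  have hl₀n : l₀ ≤ n := hlwn i j hij
  have h1 := hy2 i l₀ hl₀n
  have h2 := hy2 j l₀ hl₀n
  rw [← htij, ← heq] at h2
  have htri := dist_triangle ((f : X → X)^[l₀] (v i))
    ((f : X → X)^[l₀] ((f.symm : X → X)^[n + t i] (y i))) ((f : X → X)^[l₀] (v j))
  rw [dist_comm ((f : X → X)^[l₀] (v i))
    ((f : X → X)^[l₀] ((f.symm : X → X)^[n + t i] (y i)))] at htri
  have hlt := hlw i j hij
  rw [← hl₀def] at hlt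
  linarith


theorem iterate_mod_of_periodic {f : X → X} {x : X} {p : ℕ} (hp : 1 ≤ p)
    (hper : f^[p] x = x) : ∀ k, f^[k] x = f^[k % p] x := by
  intro k
  induction k using Nat.strong_induction_on with
  | _ k ih =>
    by_cases hk : k < p
    · rw [Nat.mod_eq_of_lt hk]
    · push_neg at hk
      have h1 : k = (k - p) + p := by omega
      have h2 : f^[k] x = f^[k - p] x := by
        conv_lhs => rw [h1]
        rw [iterate_add_apply, hper]
      rw [h2, ih (k - p) (by omega)]
      congr 1
      conv_rhs => rw [h1]
      rw [Nat.add_mod_right]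

theorem not_isolated [MetricSpace X] [CompactSpace X] [Infinite X] (f : X ≃ₜ X)
    (hf : GluingOrbit (f : X → X)) (x : X) : 𝓝[≠] x ≠ ⊥ := by
  classical
  intro hbot
  have hopen : IsOpen ({x} : Set X) := (isOpen_singleton_iff_punctured_nhds x).mpr hbot
  obtain ⟨r, hr, hball⟩ := Metric.isOpen_iff.mp hopen x rfl
  -- step 1 : periodicity
  obtain ⟨M, hM⟩ := hf (r/2) (by linarith)
  obtain ⟨t, ht, z, hz⟩ := hM (fun _ => (x, 0))
  have hz0 : z = x := by
    have h00 := hz 0 0 (by simp)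
    simp only [Finset.range_zero, Finset.sum_empty, Nat.add_zero, iterate_zero_apply] at h00
    have : z ∈ Metric.ball x r := by
      simp only [Metric.mem_ball]
      linarith
    simpa using hball this
  have hper : (f : X → X)^[t 0] x = x := by
    have h10 := hz 1 0 (by simp)
    simp only [Finset.range_one, Finset.sum_singleton, Nat.add_zero, zero_add,
      iterate_zero_apply] at h10
    rw [hz0] at h10
    have : (f : X → X)^[t 0] x ∈ Metric.ball x r := by
      simp only [Metric.mem_ball]
      linarith
    simpa using hball this
  set p : ℕ := t 0 with hp
  have hp1 : 1 ≤ p := (ht 0).1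
  -- orbit
  set O : Set X := (fun i => (f : X → X)^[i] x) '' (Set.Iio p) with hO
  have hOfin : O.Finite := (Set.finite_Iio p).image _
  have hOmem : ∀ k, (f : X → X)^[k] x ∈ O := by
    intro k
    rw [iterate_mod_of_periodic hp1 hper k]
    exact ⟨k % p, Nat.mod_lt _ (by omega), rfl⟩
  -- step 2 : approximation
  have happrox : ∀ (y : X) (η : ℝ), 0 < η → ∃ o ∈ O, dist y o < η := by
    intro y η hη
    have hδ : (0:ℝ) < min (η/2) (r/2) := lt_min (by linarith) (by linarith)
    obtain ⟨M', hM'⟩ := hf _ hδ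
    obtain ⟨t', ht', z', hz'⟩ := hM' (fun j => if j = 0 then (x, 0) else (y, 0))
    have hz'0 : z' = x := by
      have h00 := hz' 0 0 (by simp)
      simp only [Finset.range_zero, Finset.sum_empty, Nat.add_zero, iterate_zero_apply,
        reduceIte, if_true] at h00
      have : z' ∈ Metric.ball x r := by
        simp only [Metric.mem_ball]
        have := min_le_right (η/2) (r/2)
        linarith
      simpa using hball this
    have h10 := hz' 1 0 (by simp)
    simp only [Finset.range_one, Finset.sum_singleton, Nat.add_zero, zero_add,
      iterate_zero_apply, reduceIte, if_neg one_ne_zero] at h10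
    rw [hz'0] at h10
    refine ⟨(f : X → X)^[t' 0] x, hOmem _, ?_⟩
    rw [dist_comm]
    have := min_le_left (η/2) (r/2)
    calc dist ((f : X → X)^[t' 0] x) y ≤ min (η/2) (r/2) := h10
      _ < η := by linarith
  -- conclude : X = O
  have hsub : (Set.univ : Set X) ⊆ O := by
    intro y _
    have : y ∈ closure O := Metric.mem_closure_iff.mpr (fun η hη => happrox y η hη)
    rwa [hOfin.isClosed.closure_eq] at this
  have : (Set.univ : Set X).Finite := hOfin.subset hsub
  haveI := Set.finite_univ_iff.mp this
  exact not_finite X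

theorem uncountable_of_gluing [MetricSpace X] [CompactSpace X] [Infinite X] (f : X ≃ₜ X)
    (hf : GluingOrbit (f : X → X)) : ¬ Countable X := by
  intro hcnt
  have hperf : Perfect (Set.univ : Set X) := by
    refine ⟨isClosed_univ, fun x _ => ?_⟩
    rw [AccPt, Filter.principal_univ, inf_top_eq]
    exact Filter.neBot_iff.mpr (not_isolated f hf x)
  obtain ⟨g, hgr, -, hginj⟩ := hperf.exists_nat_bool_injection ⟨Classical.arbitrary X, trivial⟩
  have : Countable (ℕ → Bool) := Function.Injective.countable hginj
  obtain ⟨gg, hgg⟩ := exists_surjective_nat (ℕ → Bool)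
  obtain ⟨n, hn⟩ := hgg (fun k => !(gg k k))
  have := congrFun hn n
  simp at this


/-- If `f` is a homeomorphism of an infinite compact metric space satisfying the
gluing-orbit property, then `f` is not positively countably expansive: for every `ε > 0`
there is `x ∈ X` whose local stable set `W^s_ε(x)` is uncountable. -/
theorem stmt1 [MetricSpace X] [CompactSpace X] [Infinite X] (f : X ≃ₜ X)
    (hf : GluingOrbit (f : X → X)) :
    ∀ ε : ℝ, 0 < ε → ∃ x : X, ¬ (Ws (f : X → X) ε x).Countable := by
  intro ε hε
  by_contra hall
  push_neg at hall
  by_cases hcov : ∃ (K : ℕ) (w : Fin K → X), ∀ x : X, ∃ i,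
      ∀ k, dist ((f : X → X)^[k] x) ((f : X → X)^[k] (w i)) ≤ ε
  · obtain ⟨K, w, hw⟩ := hcov
    have hsub : (Set.univ : Set X) ⊆ ⋃ i : Fin K, Ws (f : X → X) ε (w i) := by
      intro x _
      obtain ⟨i, hi⟩ := hw x
      exact Set.mem_iUnion.mpr ⟨i, hi⟩
    have hcnt : (Set.univ : Set X).Countable :=
      Set.Countable.mono hsub (Set.countable_iUnion (fun i => hall (w i)))
    exact uncountable_of_gluing f hf (Set.countable_univ_iff.mp hcnt)
  · push_neg at hcov
    have hsep := exists_sep_tuple (F := (f : X → X)) (ε := ε) hcov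
    have hB := lemB f hf hε hsep
    obtain ⟨x₀⟩ := (inferInstance : Nonempty X)
    exact cantor f.continuous hε x₀ hB (hall x₀)
end

section
/- Let $X$ be a compact metric space and $f: X \to X$ a map with the gluing-orbit property. Then either $X$ is perfect (has no isolated points), or $X$ consists of a single periodic orbit of $f$ (i.e., there exist $x \in X$ and $n \ge 1$ with $f^n(x) = x$ and $X = \{x, f(x), \ldots, f^{n-1}(x)\}$). -/
open Function Metric Filter

variable {X : Type*}

open Topology

/-- If `f : X → X` has the gluing-orbit property on a compact metric space, then either
`X` is perfect, or `X` consists of a single periodic orbit of `f`. -/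
theorem stmt2 [MetricSpace X] [CompactSpace X] (f : X → X) (hf : GluingOrbit f) :
    Perfect (Set.univ : Set X) ∨
      ∃ x : X, ∃ n : ℕ, 1 ≤ n ∧ f^[n] x = x ∧ ∀ y : X, ∃ k < n, f^[k] x = y := by
  by_cases hp : ∀ x : X, (𝓝[≠] x).NeBot
  · left
    refine ⟨isClosed_univ, fun x _ => ?_⟩
    rw [AccPt, Filter.principal_univ, inf_top_eq]
    exact hp x
  · right
    push_neg at hp
    obtain ⟨p, hpb⟩ := hp
    -- get an isolation radius ε0
    have h0 : ∃ ε0 > 0, ∀ x : X, dist x p ≤ ε0 → x = p := by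
      have hmem : (∅ : Set X) ∈ 𝓝[≠] p := by rw [hpb]; exact Filter.mem_bot
      rw [mem_nhdsWithin] at hmem
      obtain ⟨U, hU, hpU, hsub⟩ := hmem
      obtain ⟨ε, hε, hball⟩ := Metric.isOpen_iff.mp hU p hpU
      refine ⟨ε / 2, by linarith, fun x hx => ?_⟩
      by_contra hxp
      exact absurd (hsub ⟨hball (by rw [mem_ball]; linarith), hxp⟩) (Set.notMem_empty x)
    obtain ⟨ε0, hε0, hiso⟩ := h0
    -- Step 1: p is periodic
    obtain ⟨M, hM⟩ := hf ε0 hε0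
    obtain ⟨t, ht, z, hz⟩ := hM (fun _ => (p, 0))
    have hz0 : z = p := by
      have h := hz 0 0 le_rfl
      simp only [Finset.range_zero, Finset.sum_empty, Nat.add_zero, Function.iterate_zero_apply]
        at h
      exact hiso _ h
    have hper : f^[t 0] p = p := by
      have h := hz 1 0 le_rfl
      simp only [Finset.range_one, Finset.sum_singleton, Nat.zero_add, Nat.add_zero,
        Function.iterate_zero_apply, hz0] at h
      exact hiso _ h
    set n := t 0 with hn
    have hn1 : 1 ≤ n := (ht 0).1
    have hmod : ∀ k, f^[k] p = f^[k % n] p := by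
      intro k
      conv_lhs => rw [← Nat.mod_add_div k n]
      rw [Function.iterate_add_apply, Function.iterate_mul,
        Function.iterate_fixed hper]
    refine ⟨p, n, hn1, hper, fun y => ?_⟩
    -- Step 2: every y is in the (finite, closed) orbit of p
    have hfin : ((fun j => f^[j] p) '' Set.Iio n).Finite :=
      (Set.finite_Iio n).image _
    have hyS : y ∈ closure ((fun j => f^[j] p) '' Set.Iio n) := by
      rw [Metric.mem_closure_iff]
      intro ε hε
      have hε'pos : 0 < min (ε / 2) ε0 := lt_min (by linarith) hε0
      obtain ⟨M', hM'⟩ := hf (min (ε / 2) ε0) hε'pos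
      obtain ⟨t', ht', z', hz'⟩ := hM' (fun j => (if j = 0 then p else y, 0))
      have hz'0 : z' = p := by
        have h := hz' 0 0 le_rfl
        simp only [Finset.range_zero, Finset.sum_empty, Nat.add_zero,
          Function.iterate_zero_apply, if_pos rfl] at h
        exact hiso _ (h.trans (min_le_right _ _))
      have h1 := hz' 1 0 le_rfl
      simp only [Finset.range_one, Finset.sum_singleton, Nat.add_zero,
        Function.iterate_zero_apply, hz'0] at h1
      norm_num at h1
      refine ⟨f^[t' 0 % n] p, ⟨t' 0 % n, Nat.mod_lt _ (by omega), rfl⟩, ?_⟩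
      rw [dist_comm, ← hmod]
      calc dist (f^[t' 0] p) y ≤ ε / 2 := h1.1
        _ < ε := by linarith
    rw [hfin.isClosed.closure_eq] at hyS
    obtain ⟨j, hj, hjy⟩ := hyS
    exact ⟨j, hj, hjy⟩
end

section
/- Let $X$ be a compact metric space and $f: X \to X$ a homeomorphism. Then $f$ has the gluing-orbit property if and only if $f^{-1}$ has the gluing-orbit property. -/
open Function Metric Filter

variable {X : Type*}

private lemma sum_split (m τ : ℕ → ℕ) (n j : ℕ) (hj : j ≤ n) :
    (∑ i ∈ Finset.range n, (m (n - i) + τ i)) + m 0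
      = ((∑ i ∈ Finset.range j, (m i + τ (n - 1 - i)))
          + (∑ i ∈ Finset.range (n - j), (m (n - i) + τ i))) + m j := by
  have hn : (n - j) + j = n := by omega
  have h2 := Finset.sum_range_add (fun i => m (n - i) + τ i) (n - j) j
  rw [hn] at h2
  have h2b : ∑ x ∈ Finset.range j, (m (n - (n - j + x)) + τ (n - j + x))
      = ∑ r ∈ Finset.range j, (m (j - r) + τ (n - j + r)) := by
    refine Finset.sum_congr rfl fun i hi => ?_
    have hi' : i < j := Finset.mem_range.mp hi
    have e1 : n - (n - j + i) = j - i := by omega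
    rw [e1]
  rw [h2b] at h2
  have h3 : ∑ r ∈ Finset.range j, (m (j - r) + τ (n - j + r))
      = (∑ r ∈ Finset.range j, m (j - r)) + ∑ r ∈ Finset.range j, τ (n - j + r) :=
    Finset.sum_add_distrib
  have h4 : (∑ r ∈ Finset.range j, m (j - r)) + m 0 = (∑ i ∈ Finset.range j, m i) + m j := by
    have e1 : (∑ r ∈ Finset.range j, m (j - r)) + m 0
        = ∑ r ∈ Finset.range (j + 1), m (j - r) := by
      rw [Finset.sum_range_succ]
      simp
    rw [e1]
    have e2 := Finset.sum_range_reflect m (j + 1)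
    simp only [Nat.add_sub_cancel] at e2
    rw [e2, Finset.sum_range_succ]
  have h5 : ∑ r ∈ Finset.range j, τ (n - j + r) = ∑ i ∈ Finset.range j, τ (n - 1 - i) := by
    have e1 := Finset.sum_range_reflect (fun r => τ (n - j + r)) j
    rw [← e1]
    refine Finset.sum_congr rfl fun i hi => ?_
    have hi' : i < j := Finset.mem_range.mp hi
    congr 1
    omega
  have h6 : ∑ i ∈ Finset.range j, (m i + τ (n - 1 - i))
      = (∑ i ∈ Finset.range j, m i) + ∑ i ∈ Finset.range j, τ (n - 1 - i) :=
    Finset.sum_add_distrib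
  omega

private lemma symm_iter [TopologicalSpace X] (f : X ≃ₜ X) {a b : ℕ} (h : a ≤ b) (z : X) :
    (f.symm : X → X)^[a] ((f : X → X)^[b] z) = (f : X → X)^[b - a] z := by
  obtain ⟨d, rfl⟩ : ∃ d, b = a + d := ⟨b - a, by omega⟩
  rw [Nat.add_sub_cancel_left, Function.iterate_add_apply]
  exact Function.LeftInverse.iterate (fun x => f.symm_apply_apply x) a _

private lemma apply_iter_symm [TopologicalSpace X] (f : X ≃ₜ X) {a b : ℕ} (h : a ≤ b) (z : X) :
    (f : X → X)^[a] ((f.symm : X → X)^[b] z) = (f.symm : X → X)^[b - a] z := by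
  obtain ⟨d, rfl⟩ : ∃ d, b = a + d := ⟨b - a, by omega⟩
  rw [Nat.add_sub_cancel_left, Function.iterate_add_apply]
  exact Function.LeftInverse.iterate (fun x => f.apply_symm_apply x) a _

private lemma key_lemma [MetricSpace X] (f : X ≃ₜ X) {ε : ℝ} (c : ℕ → X × ℕ)
    (n : ℕ) (T : ℕ → ℕ) (z : X)
    (hz : TracedBy (f : X → X)
      (fun k => ((f.symm : X → X)^[(c (n - k)).2] (c (n - k)).1, (c (n - k)).2)) T ε z)
    (j l : ℕ) (hj : j ≤ n) (hl : l ≤ (c j).2) :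
    dist ((f.symm : X → X)^[(∑ i ∈ Finset.range j, ((c i).2 + T (n - 1 - i))) + l]
        ((f : X → X)^[(∑ i ∈ Finset.range n, ((c (n - i)).2 + T i)) + (c 0).2] z))
      ((f.symm : X → X)^[l] (c j).1) ≤ ε := by
  have hnj : n - (n - j) = j := by omega
  have htr := hz (n - j) ((c j).2 - l)
    (by show (c j).2 - l ≤ (c (n - (n - j))).2; rw [hnj]; omega)
  simp only [hnj] at htr
  rw [apply_iter_symm f (by omega : (c j).2 - l ≤ (c j).2)] at htr
  have e1 : (c j).2 - ((c j).2 - l) = l := by omega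
  rw [e1] at htr
  have harith := sum_split (fun i => (c i).2) T n j hj
  have hle2 : (∑ i ∈ Finset.range j, ((c i).2 + T (n - 1 - i))) + l
      ≤ (∑ i ∈ Finset.range n, ((c (n - i)).2 + T i)) + (c 0).2 := by omega
  rw [symm_iter f hle2 z]
  have e2 : ((∑ i ∈ Finset.range n, ((c (n - i)).2 + T i)) + (c 0).2)
      - ((∑ i ∈ Finset.range j, ((c i).2 + T (n - 1 - i))) + l)
      = (∑ i ∈ Finset.range (n - j), ((c (n - i)).2 + T i)) + ((c j).2 - l) := by omega
  rw [e2]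
  exact htr

private lemma go [MetricSpace X] [CompactSpace X] (f : X ≃ₜ X)
    (h : GluingOrbit (f : X → X)) : GluingOrbit (f.symm : X → X) := by
  intro ε hε
  obtain ⟨M, hM⟩ := h ε hε
  refine ⟨M, fun c => ?_⟩
  choose T hT Z hZ using fun n =>
    hM (fun k => ((f.symm : X → X)^[(c (n - k)).2] (c (n - k)).1, (c (n - k)).2))
  set U : Ultrafilter ℕ := Ultrafilter.of Filter.atTop with hU
  have hUtop : (U : Filter ℕ) ≤ Filter.atTop := Ultrafilter.of_le _
  -- choose limiting gaps
  have hsel : ∀ i : ℕ, ∃ v : ℕ, (1 ≤ v ∧ v ≤ M) ∧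
      ∀ᶠ n in (U : Filter ℕ), T n (n - 1 - i) = v := by
    intro i
    have hmem : Set.Icc 1 M ∈ Ultrafilter.map (fun n => T n (n - 1 - i)) U := by
      refine Filter.mem_map.2 (Filter.univ_mem' fun n => ?_)
      exact ⟨(hT n (n - 1 - i)).1, (hT n (n - 1 - i)).2⟩
    obtain ⟨v, hv, hpure⟩ := Ultrafilter.eq_pure_of_finite_mem (Set.finite_Icc 1 M) hmem
    refine ⟨v, ⟨hv.1, hv.2⟩, ?_⟩
    have hs : {v} ∈ Ultrafilter.map (fun n => T n (n - 1 - i)) U := by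
      rw [hpure]; exact Filter.mem_pure.2 rfl
    exact hs
  choose t ht htU using hsel
  set w : ℕ → X := fun n =>
    (f : X → X)^[(∑ i ∈ Finset.range n, ((c (n - i)).2 + T n i)) + (c 0).2] (Z n) with hw
  obtain ⟨zlim, -, hzlim⟩ := (isCompact_univ (X := X)).ultrafilter_le_nhds (U.map w)
    (by simp [Filter.le_principal_iff])
  refine ⟨t, fun j => ht j, zlim, ?_⟩
  intro j l hl
  have htend : Filter.Tendsto w (U : Filter ℕ) (nhds zlim) := by
    rwa [Ultrafilter.coe_map] at hzlim
  have hcont : Continuous fun y : X =>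
      dist ((f.symm : X → X)^[(∑ i ∈ Finset.range j, ((c i).2 + t i)) + l] y)
        ((f.symm : X → X)^[l] (c j).1) :=
    (f.symm.continuous.iterate _).dist continuous_const
  have hev : ∀ᶠ n in (U : Filter ℕ),
      dist ((f.symm : X → X)^[(∑ i ∈ Finset.range j, ((c i).2 + t i)) + l] (w n))
        ((f.symm : X → X)^[l] (c j).1) ≤ ε := by
    have h1 : ∀ᶠ n in (U : Filter ℕ), j ≤ n := hUtop (Filter.eventually_ge_atTop j)
    have h2 : ∀ᶠ n in (U : Filter ℕ), ∀ i ∈ Finset.range j, T n (n - 1 - i) = t i :=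
      (Filter.eventually_all_finset _).2 fun i _ => htU i
    filter_upwards [h1, h2] with n hn1 hn2
    have hsum : (∑ i ∈ Finset.range j, ((c i).2 + t i))
        = ∑ i ∈ Finset.range j, ((c i).2 + T n (n - 1 - i)) :=
      Finset.sum_congr rfl fun i hi => by rw [hn2 i hi]
    rw [hsum]
    exact key_lemma f c n (T n) (Z n) (hZ n) j l hn1 hl
  exact le_of_tendsto ((hcont.tendsto zlim).comp htend) hev

/-- A homeomorphism of a compact metric space has the gluing-orbit property if and only if
its inverse has the gluing-orbit property. -/
theorem stmt3 [MetricSpace X] [CompactSpace X] (f : X ≃ₜ X) :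
    GluingOrbit (f : X → X) ↔ GluingOrbit (f.symm : X → X) :=
  ⟨go f, fun h => by simpa using go f.symm h⟩
end

section
/- Let $X$ be a compact metric space and $f: X \to X$ a continuous map satisfying the gluing-orbit property and having positive topological entropy. Then $f$ is sensitive. -/
open Function Metric Filter

variable {X : Type*}

/-- `f` is sensitive with sensitivity constant `ε`. -/
def SensitiveWith [MetricSpace X] (f : X → X) (ε : ℝ) : Prop :=
  ∀ x : X, ∀ δ : ℝ, 0 < δ → ∃ y : X, dist x y < δ ∧ ∃ n : ℕ, ε < dist (f^[n] x) (f^[n] y)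

/-- `f` is sensitive (to initial conditions). -/
def Sensitive [MetricSpace X] (f : X → X) : Prop :=
  ∃ ε : ℝ, 0 < ε ∧ SensitiveWith f ε
/-- The maximal cardinality of an `(n,δ)`-separated subset of `X`: a set `E` is
`(n,δ)`-separated if any two distinct `x, y ∈ E` satisfy `dist (f^[i] x) (f^[i] y) > δ`
for some `0 ≤ i ≤ n`. -/
noncomputable def sepCount [MetricSpace X] (f : X → X) (n : ℕ) (δ : ℝ) : ℕ :=
  sSup {k : ℕ | ∃ E : Finset X, E.card = k ∧
    ∀ x ∈ E, ∀ y ∈ E, x ≠ y → ∃ i ≤ n, δ < dist (f^[i] x) (f^[i] y)}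

/-- `h(f,δ) = limsup_{n → ∞} (1/n) log s(n,δ)`. -/
noncomputable def entropyAt [MetricSpace X] (f : X → X) (δ : ℝ) : EReal :=
  Filter.atTop.limsup fun n : ℕ => ((Real.log (sepCount f n δ) / n : ℝ) : EReal)

/-- The topological entropy `h(f) = lim_{δ → 0} h(f,δ)`; since `h(f,δ)` increases as `δ`
decreases to `0`, this limit equals `⨆_{δ > 0} h(f,δ)`. -/
noncomputable def topEntropy [MetricSpace X] (f : X → X) : EReal :=
  ⨆ (δ : ℝ) (_ : 0 < δ), entropyAt f δ

/-- A continuous map of a compact metric space with the gluing-orbit property and positive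
topological entropy is sensitive. -/
theorem stmt5 [MetricSpace X] [CompactSpace X] (f : X → X) (hc : Continuous f)
    (hf : GluingOrbit f) (hent : 0 < topEntropy f) :
    Sensitive f := by
  by_contra hsens
  -- If `f` is not sensitive, we show `topEntropy f ≤ 0`, contradicting `hent`.
  have hb : ∀ δ : ℝ, 0 < δ → ∃ M : ℕ, 1 ≤ M ∧ ∀ n, sepCount f n δ ≤ M := by
    intro δ hδ
    simp only [Sensitive, not_exists, not_and] at hsens
    have hεpos : 0 < δ / 8 := by positivity
    have hns := hsens (δ / 8) hεpos
    unfold SensitiveWith at hns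
    push_neg at hns
    obtain ⟨x₀, δ₀, hδ₀, hst⟩ := hns
    set ε' := min (δ / 8) δ₀ / 2 with hε'def
    have hε'pos : 0 < ε' := by positivity
    have hε'ε : ε' ≤ δ / 8 := by
      have := min_le_left (δ / 8) δ₀; rw [hε'def]; linarith
    have hε'δ₀ : ε' < δ₀ := by
      have := min_le_right (δ / 8) δ₀; rw [hε'def]; linarith
    obtain ⟨M, hM⟩ := hf ε' hε'pos
    have hM1 : 1 ≤ M := by
      obtain ⟨t, ht, -⟩ := hM fun _ => (x₀, 0)
      exact (ht 0).1.trans (ht 0).2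
    refine ⟨M, hM1, fun n => ?_⟩
    -- Every orbit segment of length `n` is shadowed by the orbit of `x₀` with a
    -- time shift in `[1, M]`.
    have key : ∀ y : X, ∃ t0 ∈ Finset.Icc 1 M, ∀ l ≤ n,
        dist (f^[l] y) (f^[t0 + l] x₀) ≤ ε' + δ / 8 := by
      intro y
      obtain ⟨t, ht, z, hz⟩ := hM fun j => if j = 1 then (y, n) else (x₀, 0)
      refine ⟨t 0, Finset.mem_Icc.2 ⟨(ht 0).1, (ht 0).2⟩, fun l hl => ?_⟩
      have hz0 : dist z x₀ ≤ ε' := by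
        have := hz 0 0 (by simp)
        simpa using this
      have hzst : ∀ k, dist (f^[k] x₀) (f^[k] z) ≤ δ / 8 :=
        hst z (by rw [dist_comm]; exact lt_of_le_of_lt hz0 hε'δ₀)
      have hz1 : dist (f^[t 0 + l] z) (f^[l] y) ≤ ε' := by
        have := hz 1 l (by simpa using hl)
        simpa using this
      calc dist (f^[l] y) (f^[t 0 + l] x₀)
          ≤ dist (f^[l] y) (f^[t 0 + l] z) + dist (f^[t 0 + l] z) (f^[t 0 + l] x₀) :=
            dist_triangle _ _ _
        _ ≤ ε' + δ / 8 := by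
            refine add_le_add (by rw [dist_comm]; exact hz1) ?_
            rw [dist_comm]; exact hzst _
    choose g hg1 hg2 using key
    refine csSup_le ⟨0, ⟨∅, by simp⟩⟩ ?_
    rintro k ⟨E, hEcard, hEsep⟩
    by_contra hk
    push_neg at hk
    have hmaps : ∀ y ∈ E, g y ∈ Finset.Icc 1 M := fun y _ => hg1 y
    obtain ⟨y, hy, y', hy', hne, heq⟩ :=
      Finset.exists_ne_map_eq_of_card_lt_of_maps_to
        (by rw [hEcard]; simpa using hk) hmaps
    obtain ⟨i, hi, hisep⟩ := hEsep y hy y' hy' hne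
    have h1 := hg2 y i hi
    have h2 := hg2 y' i hi
    rw [heq] at h1
    have htri : dist (f^[i] y) (f^[i] y') ≤ (ε' + δ / 8) + (ε' + δ / 8) := by
      calc dist (f^[i] y) (f^[i] y')
          ≤ dist (f^[i] y) (f^[g y' + i] x₀) + dist (f^[g y' + i] x₀) (f^[i] y') :=
            dist_triangle _ _ _
        _ ≤ (ε' + δ / 8) + (ε' + δ / 8) := by
            refine add_le_add h1 ?_
            rw [dist_comm]; exact h2
    linarith
  have hle : topEntropy f ≤ 0 := by
    refine iSup₂_le fun δ hδ => ?_
    obtain ⟨M, hM1, hM⟩ := hb δ hδ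
    have hten : Tendsto (fun n : ℕ => (Real.log (sepCount f n δ) / n : ℝ)) atTop (nhds 0) := by
      refine squeeze_zero (fun n => ?_) (fun n => ?_)
        (tendsto_const_div_atTop_nhds_zero_nat (Real.log M))
      · have hlog : 0 ≤ Real.log (sepCount f n δ) := by
          rcases Nat.eq_zero_or_pos (sepCount f n δ) with h | h
          · simp [h]
          · exact Real.log_nonneg (by exact_mod_cast h)
        positivity
      · have hlog : Real.log (sepCount f n δ) ≤ Real.log M := by
          rcases Nat.eq_zero_or_pos (sepCount f n δ) with h | h
          · rw [h]; simpa using Real.log_nonneg (by exact_mod_cast hM1)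
          · apply Real.log_le_log (by exact_mod_cast h)
            exact_mod_cast hM n
        have hlog0 : 0 ≤ Real.log (sepCount f n δ) := by
          rcases Nat.eq_zero_or_pos (sepCount f n δ) with h | h
          · simp [h]
          · exact Real.log_nonneg (by exact_mod_cast h)
        gcongr
    have hten' : Tendsto (fun n : ℕ =>
        ((Real.log (sepCount f n δ) / n : ℝ) : EReal)) atTop (nhds (0 : EReal)) := by
      have := EReal.tendsto_coe (f := atTop)
        (m := fun n : ℕ => (Real.log (sepCount f n δ) / n : ℝ)) (a := 0)
      rw [show ((0:ℝ):EReal) = (0 : EReal) by norm_cast] at this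
      exact this.2 hten
    rw [entropyAt, hten'.limsup_eq]
  exact absurd hent hle.not_gt
end

section
/- Let $X$ be a compact metric space and $f: X \to X$ a continuous map satisfying the gluing-orbit property. Then either $f$ is both minimal and equicontinuous, or $f$ is sensitive. -/
open Function Metric Filter

variable {X : Type*}

/-- `f` is minimal: every forward orbit is dense. -/
def MinimalMap [TopologicalSpace X] (f : X → X) : Prop :=
  ∀ x : X, Dense (Set.range fun n : ℕ => f^[n] x)

/-- `f` is equicontinuous: the family of iterates of `f` is equicontinuous. -/
def EquicontinuousMap [MetricSpace X] (f : X → X) : Prop :=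
  ∀ ε : ℝ, 0 < ε → ∃ δ : ℝ, 0 < δ ∧
    ∀ x y : X, dist x y < δ → ∀ n : ℕ, dist (f^[n] x) (f^[n] y) ≤ ε

/-- Key lemma: if `x` is an `ε`-stable point with radius `δ`, then the orbit of `x`
itself `ε + δ`-shadows the orbit of any point `u` for any prescribed length, starting at
arbitrarily large (but controlled) times. -/
lemma gluing_stable_shadow [MetricSpace X] (f : X → X) (hf : GluingOrbit f)
    {ε δ : ℝ} (hδ : 0 < δ) (x : X)
    (hx : ∀ y, dist x y < δ → ∀ n, dist (f^[n] x) (f^[n] y) ≤ ε) :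
    ∃ M : ℕ, ∀ (u : X) (L m : ℕ), ∃ T : ℕ, m < T ∧ T ≤ m + 2 * M ∧
      ∀ l ≤ L, dist (f^[T + l] x) (f^[l] u) ≤ ε + δ := by
  obtain ⟨M, hM⟩ := hf (δ / 2) (by positivity)
  refine ⟨M, fun u L m => ?_⟩
  set c : ℕ → X × ℕ := fun j => if j = 0 then (x, 0) else if j = 1 then (x, m) else (u, L)
    with hc
  obtain ⟨t, ht, z, hz⟩ := hM c
  -- tracing at j = 0, l = 0 : z is δ/2-close to x
  have h0 : dist z x ≤ δ / 2 := by
    have := hz 0 0 (by simp [hc])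
    simpa [hc] using this
  have hzx : ∀ n, dist (f^[n] x) (f^[n] z) ≤ ε := by
    intro n
    refine hx z ?_ n
    rw [dist_comm]
    exact lt_of_le_of_lt h0 (by linarith)
  -- tracing at j = 2
  have hT : (∑ i ∈ Finset.range 2, ((c i).2 + t i)) = t 0 + (m + t 1) := by
    simp [Finset.sum_range_succ, hc]
  refine ⟨t 0 + (m + t 1), ?_, ?_, ?_⟩
  · have := (ht 0).1
    have := (ht 1).1
    omega
  · have := (ht 0).2
    have := (ht 1).2
    omega
  · intro l hl
    have h2 : dist (f^[(t 0 + (m + t 1)) + l] z) (f^[l] u) ≤ δ / 2 := by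
      have := hz 2 l (by simp [hc]; exact hl)
      rw [hT] at this
      simpa [hc] using this
    calc dist (f^[(t 0 + (m + t 1)) + l] x) (f^[l] u)
        ≤ dist (f^[(t 0 + (m + t 1)) + l] x) (f^[(t 0 + (m + t 1)) + l] z)
          + dist (f^[(t 0 + (m + t 1)) + l] z) (f^[l] u) := dist_triangle _ _ _
      _ ≤ ε + δ / 2 := add_le_add (hzx _) h2
      _ ≤ ε + δ := by linarith

/-- From gluing + existence of stable points for every scale: every forward orbit is dense. -/
lemma gluing_min [MetricSpace X] (f : X → X) (hf : GluingOrbit f)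
    (hns : ∀ ε : ℝ, 0 < ε → ∃ x : X, ∃ δ : ℝ, 0 < δ ∧
      ∀ y, dist x y < δ → ∀ n, dist (f^[n] x) (f^[n] y) ≤ ε) :
    ∀ (u v : X) (r : ℝ), 0 < r → ∃ n : ℕ, dist (f^[n] u) v < r := by
  intro u v r hr
  obtain ⟨x, δ, hδ, hx⟩ := hns (r / 8) (by positivity)
  set δ' : ℝ := min δ (r / 8) with hδ'
  have hδ'0 : 0 < δ' := lt_min hδ (by positivity)
  have hx' : ∀ y, dist x y < δ' → ∀ n, dist (f^[n] x) (f^[n] y) ≤ r / 8 :=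
    fun y h n => hx y (lt_of_lt_of_le h (min_le_left _ _)) n
  obtain ⟨M, hM⟩ := gluing_stable_shadow f hf hδ'0 x hx'
  have hbound : r / 8 + δ' ≤ r / 4 := by
    have : δ' ≤ r / 8 := min_le_right _ _
    linarith
  -- find a large time s at which the orbit of x is close to v
  obtain ⟨s, hs1, _, hs3⟩ := hM v 0 (2 * M)
  have hsv : dist (f^[s] x) v < r / 2 := by
    have := hs3 0 le_rfl
    simp only [Nat.add_zero, Function.iterate_zero, id_eq] at this
    linarith
  -- shadow the orbit of u for s steps
  obtain ⟨T, hT1, hT2, hT3⟩ := hM u s 0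
  have hTs : T ≤ s := by omega
  have h3 := hT3 (s - T) (Nat.sub_le s T)
  rw [Nat.add_sub_cancel' hTs] at h3
  refine ⟨s - T, ?_⟩
  calc dist (f^[s - T] u) v ≤ dist (f^[s - T] u) (f^[s] x) + dist (f^[s] x) v :=
        dist_triangle _ _ _
    _ < r / 4 + r / 2 := by
        rw [dist_comm]
        exact add_lt_add_of_le_of_lt (le_trans h3 hbound) hsv
    _ ≤ r := by linarith

/-- Pointwise equicontinuity from minimality and stable points. -/
lemma gluing_pt [MetricSpace X] (f : X → X) (hc : Continuous f)
    (hmin : ∀ (u v : X) (r : ℝ), 0 < r → ∃ n : ℕ, dist (f^[n] u) v < r)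
    (hns : ∀ ε : ℝ, 0 < ε → ∃ x : X, ∃ δ : ℝ, 0 < δ ∧
      ∀ y, dist x y < δ → ∀ n, dist (f^[n] x) (f^[n] y) ≤ ε) :
    ∀ ε : ℝ, 0 < ε → ∀ u : X, ∃ η : ℝ, 0 < η ∧
      ∀ u', dist u u' < η → ∀ n, dist (f^[n] u) (f^[n] u') ≤ ε := by
  intro ε hε u
  obtain ⟨x, δ, hδ, hx⟩ := hns (ε / 4) (by positivity)
  obtain ⟨n, hn⟩ := hmin u x (δ / 2) (by positivity)
  set r0 : ℝ := min ε (δ / 2) with hr0def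
  have hr0 : 0 < r0 := lt_min hε (by positivity)
  set g : X → (Fin (n + 1) → X) := fun w k => f^[(k : ℕ)] w with hg
  have hgc : Continuous g := continuous_pi fun k => hc.iterate _
  obtain ⟨η, hη, h2⟩ := Metric.continuousAt_iff.1 (hgc.continuousAt (x := u)) r0 hr0
  refine ⟨η, hη, fun u' hu' k => ?_⟩
  have hgd : dist (g u') (g u) < r0 := h2 (by rwa [dist_comm])
  have hk0 : ∀ k ≤ n, dist (f^[k] u) (f^[k] u') < r0 := by
    intro k hk
    have h3 := dist_le_pi_dist (g u') (g u) ⟨k, Nat.lt_succ_of_le hk⟩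
    rw [dist_comm] at h3
    exact lt_of_le_of_lt h3 hgd
  rcases le_or_gt k n with hkn | hkn
  · exact le_trans (hk0 k hkn).le (min_le_left _ _)
  · have h1 : dist x (f^[n] u) < δ / 2 := by rw [dist_comm]; exact hn
    have h1' : dist x (f^[n] u) < δ := lt_of_lt_of_le h1 (by linarith)
    have h2' : dist x (f^[n] u') < δ := by
      calc dist x (f^[n] u') ≤ dist x (f^[n] u) + dist (f^[n] u) (f^[n] u') :=
            dist_triangle _ _ _
        _ < δ / 2 + r0 := add_lt_add h1 (hk0 n le_rfl)
        _ ≤ δ / 2 + δ / 2 := by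
            have : r0 ≤ δ / 2 := min_le_right _ _
            linarith
        _ = δ := by ring
    have ha := hx _ h1' (k - n)
    have hb := hx _ h2' (k - n)
    have hk : k = (k - n) + n := (Nat.sub_add_cancel hkn.le).symm
    rw [hk, Function.iterate_add_apply, Function.iterate_add_apply]
    calc dist (f^[k - n] (f^[n] u)) (f^[k - n] (f^[n] u'))
        ≤ dist (f^[k - n] (f^[n] u)) (f^[k - n] x)
          + dist (f^[k - n] x) (f^[k - n] (f^[n] u')) := dist_triangle _ _ _
      _ ≤ ε / 4 + ε / 4 := by
          rw [dist_comm (f^[k - n] (f^[n] u))]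
          exact add_le_add ha hb
      _ ≤ ε := by linarith

/-- Uniformizing pointwise equicontinuity on a compact space. -/
lemma gluing_unif [MetricSpace X] [CompactSpace X] (f : X → X)
    (hpt : ∀ ε : ℝ, 0 < ε → ∀ u : X, ∃ η : ℝ, 0 < η ∧
      ∀ u', dist u u' < η → ∀ n, dist (f^[n] u) (f^[n] u') ≤ ε) :
    EquicontinuousMap f := by
  intro ε hε
  rcases isEmpty_or_nonempty X with h | h
  · exact ⟨1, one_pos, fun x => isEmptyElim x⟩
  choose η hη hη2 using hpt (ε / 2) (by positivity)
  obtain ⟨s, hs⟩ := isCompact_univ.elim_finite_subcover (fun u => ball u (η u / 2))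
    (fun u => isOpen_ball) (fun v _ => Set.mem_iUnion.2 ⟨v, mem_ball_self (by
      have := hη v; positivity)⟩)
  obtain ⟨u0⟩ := h
  have hs0 : s.Nonempty := by
    obtain ⟨u, hu, _⟩ := Set.mem_iUnion₂.1 (hs (Set.mem_univ u0))
    exact ⟨u, hu⟩
  refine ⟨s.inf' hs0 (fun u => η u / 2), ?_, ?_⟩
  · rw [Finset.lt_inf'_iff]
    intro u _
    have := hη u
    positivity
  · intro v v' hvv n
    obtain ⟨u, hu, hvb⟩ := Set.mem_iUnion₂.1 (hs (Set.mem_univ v))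
    rw [mem_ball] at hvb
    have hdelta : s.inf' hs0 (fun u => η u / 2) ≤ η u / 2 := Finset.inf'_le _ hu
    have h1 : dist u v < η u := by rw [dist_comm]; linarith [hη u]
    have h2 : dist u v' < η u := by
      have hvb' : dist u v < η u / 2 := by rw [dist_comm]; exact hvb
      calc dist u v' ≤ dist u v + dist v v' := dist_triangle _ _ _
        _ < η u / 2 + η u / 2 := add_lt_add hvb' (lt_of_lt_of_le hvv hdelta)
        _ = η u := by ring
    calc dist (f^[n] v) (f^[n] v')
        ≤ dist (f^[n] v) (f^[n] u) + dist (f^[n] u) (f^[n] v') := dist_triangle _ _ _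
      _ ≤ ε / 2 + ε / 2 := by
          rw [dist_comm]
          exact add_le_add (hη2 u v h1 n) (hη2 u v' h2 n)
      _ = ε := by ring

/-- Auslander–Yorke type dichotomy: a continuous map of a compact metric space with the
gluing-orbit property is either minimal and equicontinuous, or sensitive. -/
theorem stmt6 [MetricSpace X] [CompactSpace X] (f : X → X) (hc : Continuous f)
    (hf : GluingOrbit f) :
    (MinimalMap f ∧ EquicontinuousMap f) ∨ Sensitive f := by
  by_cases hs : Sensitive f
  · exact Or.inr hs
  left
  have hns : ∀ ε : ℝ, 0 < ε → ∃ x : X, ∃ δ : ℝ, 0 < δ ∧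
      ∀ y, dist x y < δ → ∀ n, dist (f^[n] x) (f^[n] y) ≤ ε := by
    intro ε hε
    have h : ¬ SensitiveWith f ε := fun h => hs ⟨ε, hε, h⟩
    unfold SensitiveWith at h
    push_neg at h
    obtain ⟨x, δ, hδ, hδ2⟩ := h
    exact ⟨x, δ, hδ, hδ2⟩
  have hmin := gluing_min f hf hns
  constructor
  · intro u
    have : DenseRange fun n : ℕ => f^[n] u := by
      rw [Metric.denseRange_iff]
      intro v r hr
      obtain ⟨n, hn⟩ := hmin u v r hr
      exact ⟨n, by rwa [dist_comm]⟩
    exact this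
  · exact gluing_unif f (gluing_pt f hc hmin hns)
end

section
/- Let $X$ be a compact metric space, $f: X \to X$ a homeomorphism, and let $2^f: 2^X \to 2^X$ be the induced map on the hyperspace of nonempty compact subsets of $X$ equipped with the Hausdorff metric, defined by $2^f(A) = f(A)$. If $2^f$ has the gluing-orbit property, then $f$ has the gluing-orbit property. -/
open Function Metric Filter

variable {X : Type*}

open TopologicalSpace in
/-- The induced map `2^f` on the hyperspace of nonempty compact subsets of `X`
(with the Hausdorff metric), `2^f (A) = f(A)`. -/
noncomputable def hyperMap [MetricSpace X] (f : X ≃ₜ X) :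
    NonemptyCompacts X → NonemptyCompacts X :=
  fun A => ⟨⟨f '' A, A.isCompact.image f.continuous⟩, A.nonempty.image f⟩

/-- If the induced map `2^f` on the hyperspace of nonempty compact subsets (with the
Hausdorff metric) has the gluing-orbit property, then `f` has the gluing-orbit property. -/
theorem stmt8 [MetricSpace X] [CompactSpace X] (f : X ≃ₜ X)
    (hf : GluingOrbit (hyperMap f)) :
    GluingOrbit (f : X → X) := by
  have hiter : ∀ (n : ℕ) (A : TopologicalSpace.NonemptyCompacts X),
      (((hyperMap f)^[n] A : TopologicalSpace.NonemptyCompacts X) : Set X)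
        = (f : X → X)^[n] '' (A : Set X) := by
    intro n
    induction n with
    | zero => intro A; simp
    | succ n ih =>
      intro A
      rw [Function.iterate_succ_apply']
      show (f : X → X) '' (((hyperMap f)^[n] A : TopologicalSpace.NonemptyCompacts X) : Set X) = _
      rw [ih, ← Set.image_comp, ← Function.iterate_succ']
  intro ε hε
  obtain ⟨M, hM⟩ := hf ε hε
  refine ⟨M, fun c => ?_⟩
  set sing : X → TopologicalSpace.NonemptyCompacts X :=
    fun x => ⟨⟨{x}, isCompact_singleton⟩, Set.singleton_nonempty x⟩ with hsing
  obtain ⟨t, ht, Z, hZ⟩ := hM (fun j => (sing (c j).1, (c j).2))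
  obtain ⟨z, hz⟩ := Z.nonempty
  refine ⟨t, ht, z, fun j l hl => ?_⟩
  have h := hZ j l hl
  rw [Metric.NonemptyCompacts.dist_eq, hiter, hiter] at h
  simp only [hsing] at h
  rw [show ((⟨⟨{(c j).1}, isCompact_singleton⟩, Set.singleton_nonempty _⟩ :
      TopologicalSpace.NonemptyCompacts X) : Set X) = {(c j).1} from rfl,
    Set.image_singleton] at h
  have hmem : (f : X → X)^[(∑ i ∈ Finset.range j, ((c i).2 + t i)) + l] z ∈
      (f : X → X)^[(∑ i ∈ Finset.range j, ((c i).2 + t i)) + l] '' (Z : Set X) :=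
    Set.mem_image_of_mem _ hz
  have := Metric.infDist_le_hausdorffDist_of_mem (t := {(f : X → X)^[l] (c j).1}) hmem
    (Metric.hausdorffEdist_ne_top_of_nonempty_of_bounded
      (Z.nonempty.image _) (Set.singleton_nonempty _)
      ((Z.isCompact.image (f.continuous.iterate _)).isBounded)
      Bornology.isBounded_singleton)
  rw [Metric.infDist_singleton] at this
  exact this.trans h
end

section
/- Let $X$ be a compact metric space, $f: X \to X$ a homeomorphism, and let $2^f: 2^X \to 2^X$ be the induced map on the hyperspace of nonempty compact subsets of $X$ equipped with the Hausdorff metric, defined by $2^f(A) = f(A)$. If $2^f$ has the gluing-orbit property, then $f$ is topologically mixing: for all nonempty open subsets $U, V \subseteq X$ there exists $n \in \mathbb{N}$ such that $f^k(U) \cap V \neq \emptyset$ for every $k \ge n$. -/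
open Function Metric Filter

variable {X : Type*}

/-- `f` is topologically mixing. -/
def TopMixing [TopologicalSpace X] (f : X → X) : Prop :=
  ∀ U V : Set X, IsOpen U → IsOpen V → U.Nonempty → V.Nonempty →
    ∃ n : ℕ, ∀ k, n ≤ k → (f^[k] '' U ∩ V).Nonempty

open TopologicalSpace in
lemma hyper_iter [MetricSpace X] (f : X ≃ₜ X) (n : ℕ) (A : NonemptyCompacts X) :
    (((hyperMap f)^[n] A : NonemptyCompacts X) : Set X) = (f : X → X)^[n] '' A := by
  induction n with
  | zero => simp
  | succ n ih =>
    rw [Function.iterate_succ_apply']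
    show (f : X → X) '' (((hyperMap f)^[n] A : NonemptyCompacts X) : Set X) = _
    rw [ih, Function.iterate_succ', Set.image_comp]


open TopologicalSpace

/-- If the induced map `2^f` on the hyperspace of nonempty compact subsets (with the
Hausdorff metric) has the gluing-orbit property, then `f` is topologically mixing. -/
theorem stmt9 [MetricSpace X] [CompactSpace X] (f : X ≃ₜ X)
    (hf : GluingOrbit (hyperMap f)) :
    TopMixing (f : X → X) := by
  rintro U V hU hV ⟨x, hx⟩ ⟨y, hy⟩
  obtain ⟨ε1, hε1, hU1⟩ := Metric.isOpen_iff.1 hU x hx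
  obtain ⟨ε2, hε2, hV2⟩ := Metric.isOpen_iff.1 hV y hy
  set ε : ℝ := min ε1 ε2 / 2 with hεdef
  have hε : 0 < ε := by positivity
  obtain ⟨M, hM⟩ := hf ε hε
  set X0 : NonemptyCompacts X := ⟨⟨{x}, isCompact_singleton⟩, Set.singleton_nonempty x⟩ with hX0
  have hM1 : 1 ≤ M := by
    obtain ⟨t, ht, _⟩ := hM (fun _ => (X0, 0))
    exact le_trans (ht 0).1 (ht 0).2
  refine ⟨M, fun k hk => ?_⟩
  set m := k - M with hm
  have hmk : m + M = k := Nat.sub_add_cancel hk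
  set g : X → X := (f.symm : X → X) with hg
  set S : Set X := (fun i => g^[m + i] y) '' ↑(Finset.range M) with hS
  have hSne : S.Nonempty := ⟨g^[m + 0] y, ⟨0, by simp; omega, rfl⟩⟩
  have hSc : IsCompact S := ((Finset.range M).finite_toSet.image _).isCompact
  set A1 : NonemptyCompacts X := ⟨⟨S, hSc⟩, hSne⟩ with hA1
  set c : ℕ → NonemptyCompacts X × ℕ := fun j => if j = 1 then (A1, k) else (X0, 0) with hc
  obtain ⟨t, ht, Z, hZ⟩ := hM c
  have ht0M : t 0 ≤ M := (ht 0).2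
  have ht01 : 1 ≤ t 0 := (ht 0).1
  have ht0k : t 0 ≤ k := le_trans ht0M hk
  -- tracing at j = 0, l = 0
  have h0 := hZ 0 0 (by simp [hc])
  simp only [Finset.range_zero, Finset.sum_empty, Nat.add_zero, Function.iterate_zero, id] at h0
  -- tracing at j = 1, l = k - t 0
  set l := k - t 0 with hl
  have hlk : t 0 + l = k := Nat.add_sub_cancel' ht0k
  have h1 := hZ 1 l (by simp [hc, hl, Nat.sub_le])
  have hsum : (∑ i ∈ Finset.range 1, ((c i).2 + t i)) = t 0 := by simp [hc]
  rw [hsum, hlk] at h1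
  have hc1 : (c 1).1 = A1 := by simp [hc]
  rw [hc1] at h1
  -- convert to Hausdorff distances on sets
  have hc0 : (c 0).1 = X0 := by simp [hc]
  rw [hc0] at h0
  have hd0 : hausdorffDist (Z : Set X) ({x} : Set X) ≤ ε := by
    rw [NonemptyCompacts.dist_eq] at h0; exact h0
  have hd1 : hausdorffDist ((f : X → X)^[k] '' (Z : Set X)) ((f : X → X)^[l] '' S) ≤ ε := by
    have := h1
    rw [NonemptyCompacts.dist_eq, hyper_iter, hyper_iter] at this
    exact this
  -- y belongs to f^[l] '' S
  have hyS : y ∈ (f : X → X)^[l] '' S := by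
    refine ⟨g^[m + (M - t 0)] y, ⟨M - t 0, ?_, rfl⟩, ?_⟩
    · simp only [Finset.coe_range, Set.mem_Iio]
      omega
    · have hml : m + (M - t 0) = l := by omega
      rw [hml]
      have : Function.LeftInverse (f : X → X) g := f.apply_symm_apply
      exact this.iterate l y
  -- finiteness of Hausdorff edist
  have hZne : (Z : Set X).Nonempty := Z.nonempty
  have hfin : EMetric.hausdorffEdist ((f : X → X)^[l] '' S) ((f : X → X)^[k] '' (Z : Set X)) ≠ ⊤ :=
    Metric.hausdorffEdist_ne_top_of_nonempty_of_bounded ⟨y, hyS⟩ (hZne.image _) Metric.isBounded_of_compactSpace Metric.isBounded_of_compactSpace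
  have h2ε : hausdorffDist ((f : X → X)^[l] '' S) ((f : X → X)^[k] '' (Z : Set X)) < 2 * ε := by
    rw [Metric.hausdorffDist_comm]
    calc hausdorffDist _ _ ≤ ε := hd1
    _ < 2 * ε := by linarith
  obtain ⟨b, hb, hyb⟩ := Metric.exists_dist_lt_of_hausdorffDist_lt hyS h2ε hfin
  obtain ⟨z, hzZ, rfl⟩ := hb
  -- z is close to x
  have hfinz : EMetric.hausdorffEdist (Z : Set X) ({x} : Set X) ≠ ⊤ :=
    Metric.hausdorffEdist_ne_top_of_nonempty_of_bounded hZne (Set.singleton_nonempty x)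
      Metric.isBounded_of_compactSpace Metric.isBounded_of_compactSpace
  have hzx : dist z x ≤ ε := by
    have := Metric.infDist_le_hausdorffDist_of_mem hzZ hfinz
    rw [Metric.infDist_singleton] at this
    exact le_trans this hd0
  have h2e1 : 2 * ε ≤ ε1 := by
    rw [hεdef]; have := min_le_left ε1 ε2; linarith
  have h2e2 : 2 * ε ≤ ε2 := by
    rw [hεdef]; have := min_le_right ε1 ε2; linarith
  refine ⟨(f : X → X)^[k] z, ⟨z, hU1 ?_, rfl⟩, hV2 ?_⟩
  · exact Metric.mem_ball.2 (lt_of_le_of_lt hzx (by linarith))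
  · exact Metric.mem_ball.2 (by rw [dist_comm]; linarith)
end

section
/- Let $X$ be a compact metric space and $f: X \to X$ a homeomorphism that has the gluing-orbit property but is not topologically mixing. Then the induced hyperspace map $2^f$ on the space of nonempty compact subsets of $X$ with the Hausdorff metric does not have the gluing-orbit property. -/
open Function Metric Filter

variable {X : Type*}

open TopologicalSpace in
lemma hyperMap_iter_coe [MetricSpace X] (f : X ≃ₜ X) (n : ℕ) (A : NonemptyCompacts X) :
    ((hyperMap f)^[n] A : Set X) = f^[n] '' (A : Set X) := by
  induction n with
  | zero => simp
  | succ n ih =>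
      rw [Function.iterate_succ_apply']
      show (f : X → X) '' (((hyperMap f)^[n] A : Set X)) = _
      rw [ih, ← Set.image_comp, ← Function.iterate_succ']

/-- If a homeomorphism of a compact metric space has the gluing-orbit property but is not
topologically mixing, then its induced hyperspace map `2^f` does not have the
gluing-orbit property. -/
theorem stmt10 [MetricSpace X] [CompactSpace X] (f : X ≃ₜ X)
    (hf : GluingOrbit (f : X → X)) (hmix : ¬ TopMixing (f : X → X)) :
    ¬ GluingOrbit (hyperMap f) := by
  intro hg
  apply hmix
  intro U V hU hV hUne hVne
  obtain ⟨x, hx⟩ := hUne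
  obtain ⟨y, hy⟩ := hVne
  have : Nonempty X := ⟨x⟩
  obtain ⟨εU, hεU, hUb⟩ := Metric.isOpen_iff.1 hU x hx
  obtain ⟨εV, hεV, hVb⟩ := Metric.isOpen_iff.1 hV y hy
  set ε := min εU εV with hεdef
  have hε : 0 < ε := lt_min hεU hεV
  obtain ⟨M, hM⟩ := hg (ε / 2) (by positivity)
  refine ⟨M, fun k hk => ?_⟩
  set Xfull : TopologicalSpace.NonemptyCompacts X :=
    ⟨⟨Set.univ, isCompact_univ⟩, Set.univ_nonempty⟩ with hXfull
  set Sx : TopologicalSpace.NonemptyCompacts X :=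
    ⟨⟨{x}, isCompact_singleton⟩, Set.singleton_nonempty x⟩ with hSx
  have hfix : ∀ n, (hyperMap f)^[n] Xfull = Xfull := by
    intro n
    apply TopologicalSpace.NonemptyCompacts.ext
    rw [hyperMap_iter_coe]
    show f^[n] '' Set.univ = Set.univ
    exact Set.image_univ_of_surjective (Function.Surjective.iterate f.surjective n)
  set c : ℕ → TopologicalSpace.NonemptyCompacts X × ℕ :=
    fun j => if j = 0 then (Sx, 0) else (Xfull, k) with hc
  obtain ⟨t, ht, z, hz⟩ := hM c
  -- fact 1 : z ⊆ ball x ε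
  have h0 := hz 0 0 (by simp [hc])
  simp only [hc, Finset.range_zero, Finset.sum_empty, Nat.add_zero,
    Function.iterate_zero, id_eq, if_pos rfl] at h0
  have hzU : (z : Set X) ⊆ U := by
    intro p hp
    apply hUb
    have hfin : EMetric.hausdorffEdist (z : Set X) (Sx : Set X) ≠ ⊤ :=
      Metric.hausdorffEdist_ne_top_of_nonempty_of_bounded z.nonempty Sx.nonempty
        z.isCompact.isBounded Sx.isCompact.isBounded
    have := Metric.infDist_le_hausdorffDist_of_mem hp hfin
    rw [show (Sx : Set X) = {x} from rfl, Metric.infDist_singleton] at this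
    have : dist p x ≤ ε / 2 := this.trans (by rwa [Metric.NonemptyCompacts.dist_eq] at h0)
    calc dist p x ≤ ε / 2 := this
      _ < ε := by linarith
      _ ≤ εU := min_le_left _ _
  -- fact 2 : at time t 0 + l, traced set is ε-dense
  have h1 : ∀ l, l ≤ k → (f^[t 0 + l] '' U ∩ V).Nonempty := by
    intro l hl
    have h := hz 1 l (by show l ≤ k; exact hl)
    rw [show (c 1).1 = Xfull from rfl, Finset.sum_range_one,
      show (c 0).2 = 0 from rfl, Nat.zero_add, hfix l,
      Metric.NonemptyCompacts.dist_eq] at h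
    set W := (hyperMap f)^[t 0 + l] z with hW
    have hfin : EMetric.hausdorffEdist (Xfull : Set X) (W : Set X) ≠ ⊤ :=
      Metric.hausdorffEdist_ne_top_of_nonempty_of_bounded Xfull.nonempty W.nonempty
        Xfull.isCompact.isBounded W.isCompact.isBounded
    have hy' : y ∈ (Xfull : Set X) := Set.mem_univ y
    have hinf : Metric.infDist y (W : Set X) ≤ ε / 2 := by
      have := Metric.infDist_le_hausdorffDist_of_mem hy' hfin
      rw [Metric.hausdorffDist_comm] at this
      exact this.trans h
    have hlt : Metric.infDist y (W : Set X) < ε := lt_of_le_of_lt hinf (by linarith)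
    obtain ⟨w, hwW, hw⟩ := (Metric.infDist_lt_iff W.nonempty).1 hlt
    rw [hW, hyperMap_iter_coe] at hwW
    refine ⟨w, ?_, hVb ?_⟩
    · exact Set.image_mono hzU hwW
    · rw [Metric.mem_ball, dist_comm]
      exact hw.trans_le (min_le_right _ _)
  have ht0 := ht 0
  have hl : k - t 0 ≤ k := Nat.sub_le _ _
  have := h1 (k - t 0) hl
  rwa [Nat.add_sub_cancel' (ht0.2.trans hk)] at this
end

section
/- Let $X$ be a compact metric space and $f: X \to X$ a positively countably expansive homeomorphism that is topologically transitive and satisfies the shadowing property. Then $X$ is countable. -/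
open Function Metric Filter

variable {X : Type*}

/-- `p` is a transitive point: its forward orbit is dense. -/
def TransitivePoint [TopologicalSpace X] (f : X → X) (p : X) : Prop :=
  Dense (Set.range fun n : ℕ => f^[n] p)
/-- The `n`-th iterate (`n ∈ ℤ`) of a homeomorphism `f`. -/
def zIter [TopologicalSpace X] (f : X ≃ₜ X) (n : ℤ) : X → X := fun x => (f.toEquiv ^ n) x

/-- `f` has the shadowing property: every `δ`-pseudo-orbit (indexed by `ℤ`) is
`ε`-shadowed by a true orbit. -/
def Shadowing [MetricSpace X] (f : X ≃ₜ X) : Prop :=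
  ∀ ε : ℝ, 0 < ε → ∃ δ : ℝ, 0 < δ ∧ ∀ x : ℤ → X,
    (∀ n : ℤ, dist (f (x n)) (x (n + 1)) < δ) →
    ∃ y : X, ∀ n : ℤ, dist (zIter f n y) (x n) < ε

/- ---------------- auxiliary material ---------------- -/

lemma zIter_natCast [TopologicalSpace X] (f : X ≃ₜ X) (n : ℕ) (y : X) :
    zIter f (n : ℤ) y = (f : X → X)^[n] y := by
  unfold zIter
  rw [zpow_natCast]
  induction n generalizing y with
  | zero => simp
  | succ k ih =>
    rw [pow_succ, Equiv.Perm.mul_apply, Function.iterate_succ_apply, ih]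
    simp

lemma divmod_helper (L q r m : ℕ) (hL : 0 < L) (hr : r < L) (hm : m = r + q * L) :
    m / L = q ∧ m % L = r := by
  subst hm
  constructor
  · rw [Nat.add_mul_div_right _ _ hL, Nat.div_eq_of_lt hr, Nat.zero_add]
  · rw [Nat.add_mul_mod_self_right, Nat.mod_eq_of_lt hr]

open Classical in
/-- The branching pseudo-orbit used in the "split" case: the forward orbit of `z`
in the future, and in the past the concatenation of copies of the loop `u` or `u'`
according to the binary data `σ`. -/
noncomputable def splitOrbit [MetricSpace X] (f : X ≃ₜ X) (z : X) (L : ℕ)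
    (u u' : ℕ → X) (σ : Set ℕ) : ℤ → X := fun n =>
  if 0 ≤ n then (f : X → X)^[n.toNat] z
  else (if ((-n).toNat - 1) / L ∈ σ then u else u') (L - 1 - ((-n).toNat - 1) % L)

section SplitAbsurd

variable [MetricSpace X]

lemma splitOrbit_nonneg (f : X ≃ₜ X) (z : X) (L : ℕ) (u u' : ℕ → X) (σ : Set ℕ)
    (k : ℕ) : splitOrbit f z L u u' σ (k : ℤ) = (f : X → X)^[k] z := by
  rw [splitOrbit, if_pos (Int.natCast_nonneg k)]
  simp

open Classical in
lemma splitOrbit_neg (f : X ≃ₜ X) (z : X) (L : ℕ) (u u' : ℕ → X) (σ : Set ℕ)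
    (t : ℕ) (ht : 1 ≤ t) :
    splitOrbit f z L u u' σ (-(t : ℤ)) =
      (if (t - 1) / L ∈ σ then u else u') (L - 1 - (t - 1) % L) := by
  have h0 : ¬ (0 : ℤ) ≤ -(t : ℤ) := by omega
  rw [splitOrbit, if_neg h0]
  norm_num

lemma split_absurd (f : X ≃ₜ X) {ε δ : ℝ} (hε : 0 < ε) (hδ : 0 < δ)
    (hWs : ∀ x : X, (Ws (f : X → X) ε x).Countable)
    (hshad : ∀ x : ℤ → X, (∀ n : ℤ, dist (f (x n)) (x (n + 1)) < δ) →
      ∃ y : X, ∀ n : ℤ, dist (zIter f n y) (x n) < ε / 2)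
    (z : X) (L : ℕ) (u u' : ℕ → X)
    (hu0 : u 0 = z) (hu'0 : u' 0 = z) (huL : u L = z) (hu'L : u' L = z)
    (hcu : ∀ i, i < L → dist (f (u i)) (u (i + 1)) < δ)
    (hcu' : ∀ i, i < L → dist (f (u' i)) (u' (i + 1)) < δ)
    (j : ℕ) (hjL : j ≤ L) (hsep : ε < dist (u j) (u' j)) : False := by
  classical
  have hne : u j ≠ u' j := by
    intro h
    rw [h, dist_self] at hsep
    linarith
  have hj0 : j ≠ 0 := by
    intro h
    rw [h, hu0, hu'0] at hne
    exact hne rfl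
  have hjL' : j < L := by
    rcases eq_or_lt_of_le hjL with h | h
    · rw [h, huL, hu'L] at hne
      exact absurd rfl hne
    · exact h
  have hL : 0 < L := by omega
  -- endpoint and chain facts for the selected loop
  have hw0 : ∀ σ : Set ℕ, ∀ i, (if i ∈ σ then u else u') 0 = z := by
    intro σ i; by_cases h : i ∈ σ <;> simp [h, hu0, hu'0]
  have hwL : ∀ σ : Set ℕ, ∀ i, (if i ∈ σ then u else u') L = z := by
    intro σ i; by_cases h : i ∈ σ <;> simp [h, huL, hu'L]
  have hwc : ∀ σ : Set ℕ, ∀ i k, k < L →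
      dist (f ((if i ∈ σ then u else u') k)) ((if i ∈ σ then u else u') (k + 1)) < δ := by
    intro σ i k hk; by_cases h : i ∈ σ <;> simp [h, hcu k hk, hcu' k hk]
  -- pseudo-orbit property
  have hchain : ∀ σ : Set ℕ, ∀ n : ℤ,
      dist (f (splitOrbit f z L u u' σ n)) (splitOrbit f z L u u' σ (n + 1)) < δ := by
    intro σ n
    rcases le_or_gt 0 n with hn | hn
    · have h1 : splitOrbit f z L u u' σ n = (f : X → X)^[n.toNat] z := by
        have := splitOrbit_nonneg f z L u u' σ n.toNat
        rwa [Int.toNat_of_nonneg hn] at this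
      have h2 : splitOrbit f z L u u' σ (n + 1) = (f : X → X)^[n.toNat + 1] z := by
        have := splitOrbit_nonneg f z L u u' σ (n.toNat + 1)
        rw [show ((n.toNat + 1 : ℕ) : ℤ) = n + 1 by omega] at this
        exact this
      rw [h1, h2, Function.iterate_succ_apply', dist_self]
      exact hδ
    · -- n < 0
      set t : ℕ := (-n).toNat with hts
      have ht1 : 1 ≤ t := by rw [hts]; omega
      have htn : (t : ℤ) = -n := by rw [hts]; omega
      clear_value t
      have hxn : splitOrbit f z L u u' σ n =
          (if (t - 1) / L ∈ σ then u else u') (L - 1 - (t - 1) % L) := by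
        have := splitOrbit_neg f z L u u' σ t ht1
        rw [show -(t : ℤ) = n by omega] at this
        exact this
      set q := (t - 1) / L with hq
      set r := (t - 1) % L with hr
      have hrL : r < L := by rw [hr]; exact Nat.mod_lt _ hL
      have hqr : q * L + r = t - 1 := by
        rw [hq, hr, Nat.mul_comm]
        exact Nat.div_add_mod (t - 1) L
      clear_value q r
      rcases eq_or_lt_of_le ht1 with h1 | h1
      · -- t = 1 : next point is `z` at time 0
        have hq0 : q = 0 := by
          rw [hq, ← h1]
          simp
        have hr0 : r = 0 := by
          rw [hr, ← h1]
          simp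
        have h2 : splitOrbit f z L u u' σ (n + 1) = z := by
          have := splitOrbit_nonneg f z L u u' σ 0
          rw [show ((0 : ℕ) : ℤ) = n + 1 by omega] at this
          simpa using this
        rw [hxn, h2, hr0]
        have := hwc σ q (L - 1) (by omega)
        rw [show L - 1 + 1 = L by omega, hwL] at this
        simpa [Nat.sub_zero] using this
      · -- t ≥ 2
        have hxn1 : splitOrbit f z L u u' σ (n + 1) =
            (if (t - 2) / L ∈ σ then u else u') (L - 1 - (t - 2) % L) := by
          have := splitOrbit_neg f z L u u' σ (t - 1) (by omega)
          rw [show -((t - 1 : ℕ) : ℤ) = n + 1 by omega] at this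
          rw [this]
          congr 3
        by_cases hr0 : r = 0
        · -- beginning of a block : previous time is the end of the previous block
          have hq1 : 1 ≤ q := by
            rcases Nat.eq_zero_or_pos q with h | h
            · rw [h, Nat.zero_mul] at hqr
              omega
            · exact h
          have e2 : t - 2 = (L - 1) + (q - 1) * L := by
            have hM : q * L = (q - 1) * L + L := by
              have : q - 1 + 1 = q := by omega
              rw [← this, Nat.succ_mul, this]
            generalize hG : (q - 1) * L = G at hM ⊢
            generalize hH : q * L = H at hqr hM
            omega
          obtain ⟨ediv, emod⟩ := divmod_helper L (q - 1) (L - 1) (t - 2) hL (by omega) e2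
          rw [hxn1, ediv, emod]
          rw [hxn, hr0, Nat.sub_zero]
          rw [show L - 1 - (L - 1) = 0 by omega, hw0]
          have := hwc σ q (L - 1) (by omega)
          rw [show L - 1 + 1 = L by omega, hwL] at this
          exact this
        · -- middle of a block
          have e2 : t - 2 = (r - 1) + q * L := by
            generalize hH : q * L = H at hqr ⊢
            omega
          obtain ⟨ediv, emod⟩ := divmod_helper L q (r - 1) (t - 2) hL (by omega) e2
          rw [hxn1, ediv, emod, hxn]
          rw [show L - 1 - (r - 1) = (L - 1 - r) + 1 by omega]
          exact hwc σ q (L - 1 - r) (by omega)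
  -- the shadowing points
  have hex : ∀ σ : Set ℕ, ∃ y : X, ∀ n : ℤ,
      dist (zIter f n y) (splitOrbit f z L u u' σ n) < ε / 2 :=
    fun σ => hshad _ (hchain σ)
  choose y hy using hex
  -- all shadow points lie in one stable set
  have hfwd : ∀ σ : Set ℕ, ∀ k : ℕ,
      dist ((f : X → X)^[k] (y σ)) ((f : X → X)^[k] z) < ε / 2 := by
    intro σ k
    have h := hy σ (k : ℤ)
    rwa [zIter_natCast, splitOrbit_nonneg] at h
  have hmem : ∀ σ : Set ℕ, y σ ∈ Ws (f : X → X) ε (y ∅) := by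
    intro σ k
    have h1 := hfwd σ k
    have h2 := hfwd ∅ k
    have := dist_triangle ((f : X → X)^[k] (y σ)) ((f : X → X)^[k] z)
      ((f : X → X)^[k] (y ∅))
    rw [dist_comm ((f : X → X)^[k] z)] at this
    linarith
  -- the shadow points are pairwise distinct
  have hinj : Function.Injective y := by
    intro σ τ h
    by_contra hst
    have : ∃ i, ¬ ((i ∈ σ) ↔ (i ∈ τ)) := by
      by_contra hall
      push_neg at hall
      exact hst (Set.ext fun i => hall i)
    obtain ⟨i, hi⟩ := this
    set T : ℕ := i * L + (L - j) with hT
    have hT1 : 1 ≤ T := by omega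
    have e2 : T - 1 = (L - j - 1) + i * L := by
      generalize hH : i * L = H at hT ⊢
      omega
    obtain ⟨ediv, emod⟩ := divmod_helper L i (L - j - 1) (T - 1) hL (by omega) e2
    have hval : ∀ ρ : Set ℕ, splitOrbit f z L u u' ρ (-(T : ℤ)) =
        (if i ∈ ρ then u else u') j := by
      intro ρ
      have earg : L - 1 - (L - j - 1) = j := by omega
      rw [splitOrbit_neg f z L u u' ρ T hT1, ediv, emod, earg]
    have hd : ε < dist (splitOrbit f z L u u' σ (-(T : ℤ)))
        (splitOrbit f z L u u' τ (-(T : ℤ))) := by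
      rw [hval σ, hval τ]
      by_cases h1 : i ∈ σ
      · have h2 : i ∉ τ := fun h2 => hi ⟨fun _ => h2, fun _ => h1⟩
        rw [if_pos h1, if_neg h2]
        exact hsep
      · have h2 : i ∈ τ := by
          by_contra h2
          exact hi ⟨fun h3 => absurd h3 h1, fun h3 => absurd h3 h2⟩
        rw [if_neg h1, if_pos h2, dist_comm]
        exact hsep
    have h1 := hy σ (-(T : ℤ))
    have h2 := hy τ (-(T : ℤ))
    rw [h] at h1
    have h3 : dist (splitOrbit f z L u u' σ (-(T : ℤ))) (splitOrbit f z L u u' τ (-(T : ℤ))) ≤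
        dist (zIter f (-(T : ℤ)) (y τ)) (splitOrbit f z L u u' σ (-(T : ℤ))) +
          dist (zIter f (-(T : ℤ)) (y τ)) (splitOrbit f z L u u' τ (-(T : ℤ))) := by
      rw [dist_comm (zIter f (-(T : ℤ)) (y τ)) (splitOrbit f z L u u' σ (-(T : ℤ)))]
      exact dist_triangle _ _ _
    linarith
  -- contradiction with countability of the stable set
  have hc : Countable (Ws (f : X → X) ε (y ∅)) := (hWs (y ∅)).to_subtype
  obtain ⟨e, he⟩ := Countable.exists_injective_nat (Ws (f : X → X) ε (y ∅))
  refine Function.cantor_injective (fun s => e ⟨y s, hmem s⟩) ?_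
  intro s t hst
  exact hinj (congrArg Subtype.val (he hst))

end SplitAbsurd


section Loops

variable [MetricSpace X]

/-- A loop at `a`: ride the orbit of `w` for `K` steps, chain back to `a` along the
orbit of `q`, then ride the orbit of `v` for `K` steps, and chain back to `a` again. -/
def genLoop (f : X ≃ₜ X) (a w v q : X) (K c₁ C c₂ D : ℕ) : ℕ → X := fun i =>
  if i = 0 then a
  else if i ≤ K then (f : X → X)^[i] w
  else if i ≤ K + C then (f : X → X)^[c₁ + (i - K - 1)] q
  else if i = K + C + 1 then a
  else if i ≤ 2*K + C + 1 then (f : X → X)^[i - (K + C + 1)] v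
  else if i ≤ 2*K + C + D + 1 then (f : X → X)^[c₂ + (i - (2*K + C + 2))] q
  else a

variable (f : X ≃ₜ X) (a w v q : X) (K c₁ C c₂ D : ℕ)

lemma genLoop_eval0 : genLoop f a w v q K c₁ C c₂ D 0 = a := by
  simp [genLoop]

lemma genLoop_eval1 {i : ℕ} (h1 : 1 ≤ i) (h2 : i ≤ K) :
    genLoop f a w v q K c₁ C c₂ D i = (f : X → X)^[i] w := by
  simp only [genLoop]
  rw [if_neg (by omega), if_pos h2]

lemma genLoop_eval2 {i : ℕ} (h1 : K < i) (h2 : i ≤ K + C) :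
    genLoop f a w v q K c₁ C c₂ D i = (f : X → X)^[c₁ + (i - K - 1)] q := by
  simp only [genLoop]
  rw [if_neg (by omega), if_neg (by omega), if_pos h2]

lemma genLoop_eval3 : genLoop f a w v q K c₁ C c₂ D (K + C + 1) = a := by
  simp only [genLoop]
  rw [if_neg (by omega), if_neg (by omega), if_neg (by omega)]
  simp

lemma genLoop_eval4 {i : ℕ} (h1 : K + C + 1 < i) (h2 : i ≤ 2*K + C + 1) :
    genLoop f a w v q K c₁ C c₂ D i = (f : X → X)^[i - (K + C + 1)] v := by
  simp only [genLoop]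
  rw [if_neg (by omega), if_neg (by omega), if_neg (by omega), if_neg (by omega), if_pos h2]

lemma genLoop_eval5 {i : ℕ} (h1 : 2*K + C + 1 < i) (h2 : i ≤ 2*K + C + D + 1) :
    genLoop f a w v q K c₁ C c₂ D i = (f : X → X)^[c₂ + (i - (2*K + C + 2))] q := by
  simp only [genLoop]
  rw [if_neg (by omega), if_neg (by omega), if_neg (by omega), if_neg (by omega),
    if_neg (by omega), if_pos h2]

lemma genLoop_eval6 {i : ℕ} (h1 : 2*K + C + D + 1 < i) :
    genLoop f a w v q K c₁ C c₂ D i = a := by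
  simp only [genLoop]
  rw [if_neg (by omega), if_neg (by omega), if_neg (by omega), if_neg (by omega),
    if_neg (by omega), if_neg (by omega)]

lemma iter_succ' (n : ℕ) (x : X) :
    f ((f : X → X)^[n] x) = (f : X → X)^[n+1] x :=
  (Function.iterate_succ_apply' _ _ _).symm

lemma genLoop_chain {δ : ℝ} (hδ : 0 < δ) (hK : 1 ≤ K) (hC : 1 ≤ C) (hD : 1 ≤ D)
    (hw : dist (f a) ((f : X → X)^[1] w) < δ)
    (h1 : dist ((f : X → X)^[K+1] w) ((f : X → X)^[c₁] q) < δ)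
    (h2 : dist ((f : X → X)^[c₁+C] q) a < δ)
    (hv : dist (f a) ((f : X → X)^[1] v) < δ)
    (h3 : dist ((f : X → X)^[K+1] v) ((f : X → X)^[c₂] q) < δ)
    (h4 : dist ((f : X → X)^[c₂+D] q) a < δ) :
    ∀ i, i < 2*K + C + D + 2 →
      dist (f (genLoop f a w v q K c₁ C c₂ D i)) (genLoop f a w v q K c₁ C c₂ D (i+1)) < δ := by
  intro i hi
  have hcases : i = 0 ∨ (1 ≤ i ∧ i < K) ∨ i = K ∨ (K < i ∧ i < K + C) ∨ i = K + C ∨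
      i = K + C + 1 ∨ (K + C + 1 < i ∧ i < 2*K + C + 1) ∨ i = 2*K + C + 1 ∨
      (2*K + C + 1 < i ∧ i < 2*K + C + D + 1) ∨ i = 2*K + C + D + 1 := by omega
  rcases hcases with h | ⟨ha1, ha2⟩ | h | ⟨ha1, ha2⟩ | h | h | ⟨ha1, ha2⟩ | h | ⟨ha1, ha2⟩ | h
  · subst h
    rw [genLoop_eval0, genLoop_eval1 f a w v q K c₁ C c₂ D (le_refl 1) hK]
    exact hw
  · rw [genLoop_eval1 f a w v q K c₁ C c₂ D ha1 (by omega),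
      genLoop_eval1 f a w v q K c₁ C c₂ D (by omega) (by omega),
      iter_succ' f]
    rw [dist_self]
    exact hδ
  · rw [h, genLoop_eval1 f a w v q K c₁ C c₂ D hK (le_refl K),
      genLoop_eval2 f a w v q K c₁ C c₂ D (by omega) (by omega),
      iter_succ' f]
    rw [show K + 1 - K - 1 = 0 by omega, Nat.add_zero]
    exact h1
  · rw [genLoop_eval2 f a w v q K c₁ C c₂ D ha1 (by omega),
      genLoop_eval2 f a w v q K c₁ C c₂ D (by omega) (by omega),
      iter_succ' f]
    rw [show c₁ + (i - K - 1) + 1 = c₁ + (i + 1 - K - 1) by omega]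
    rw [dist_self]
    exact hδ
  · subst h
    rw [genLoop_eval2 f a w v q K c₁ C c₂ D (by omega) (le_refl _),
      show K + C + 1 = (K + C) + 1 from rfl, genLoop_eval3,
      iter_succ' f]
    rw [show c₁ + (K + C - K - 1) + 1 = c₁ + C by omega]
    exact h2
  · subst h
    rw [genLoop_eval3, genLoop_eval4 f a w v q K c₁ C c₂ D (by omega) (by omega)]
    rw [show K + C + 1 + 1 - (K + C + 1) = 1 by omega]
    exact hv
  · rw [genLoop_eval4 f a w v q K c₁ C c₂ D ha1 (by omega),
      genLoop_eval4 f a w v q K c₁ C c₂ D (by omega) (by omega),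
      iter_succ' f]
    rw [show i - (K + C + 1) + 1 = i + 1 - (K + C + 1) by omega]
    rw [dist_self]
    exact hδ
  · subst h
    rw [genLoop_eval4 f a w v q K c₁ C c₂ D (by omega) (le_refl _),
      genLoop_eval5 f a w v q K c₁ C c₂ D (by omega) (by omega),
      iter_succ' f]
    rw [show 2*K + C + 1 - (K + C + 1) + 1 = K + 1 by omega,
      show c₂ + (2*K + C + 1 + 1 - (2*K + C + 2)) = c₂ by omega]
    exact h3
  · rw [genLoop_eval5 f a w v q K c₁ C c₂ D ha1 (by omega),
      genLoop_eval5 f a w v q K c₁ C c₂ D (by omega) (by omega),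
      iter_succ' f]
    rw [show c₂ + (i - (2*K + C + 2)) + 1 = c₂ + (i + 1 - (2*K + C + 2)) by omega]
    rw [dist_self]
    exact hδ
  · subst h
    rw [genLoop_eval5 f a w v q K c₁ C c₂ D (by omega) (le_refl _),
      genLoop_eval6 f a w v q K c₁ C c₂ D (by omega),
      iter_succ' f]
    rw [show c₂ + (2*K + C + D + 1 - (2*K + C + 2)) + 1 = c₂ + D by omega]
    exact h4

end Loops

lemma no_split_stable [MetricSpace X] (f : X ≃ₜ X) {ε δ δ₁ : ℝ}
    (hδ : 0 < δ) (hδ₁ε : δ₁ ≤ ε)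
    (hUC : ∀ c d : X, dist c d < δ₁ → dist (f c) (f d) < δ)
    (p : X) (hp : Dense (Set.range fun n : ℕ => (f : X → X)^[n] p))
    (hnsplit : ¬ ∃ (z : X) (L : ℕ) (u u' : ℕ → X),
      (u 0 = z ∧ u' 0 = z ∧ u L = z ∧ u' L = z ∧
        (∀ i, i < L → dist (f (u i)) (u (i + 1)) < δ) ∧
        (∀ i, i < L → dist (f (u' i)) (u' (i + 1)) < δ)) ∧
      ∃ j, j ≤ L ∧ ε < dist (u j) (u' j))
    (a b : X) (ha : ∀ r : ℝ, 0 < r → ∀ N : ℕ, ∃ n, N ≤ n ∧ dist ((f : X → X)^[n] p) a < r)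
    (hab : dist a b < δ₁) :
    ∀ k : ℕ, dist ((f : X → X)^[k] a) ((f : X → X)^[k] b) ≤ ε := by
  intro K
  rcases Nat.eq_zero_or_pos K with rfl | hK
  · simpa using le_trans (le_of_lt hab) hδ₁ε
  have hdense : ∀ (x : X) (r : ℝ), 0 < r → ∃ n : ℕ, dist ((f : X → X)^[n] p) x < r := by
    intro x r hr
    obtain ⟨yy, hy1, hy2⟩ := Metric.mem_closure_iff.mp (hp x) r hr
    obtain ⟨n, rfl⟩ := hy1
    exact ⟨n, by rwa [dist_comm]⟩
  obtain ⟨n₁, hn₁⟩ := hdense ((f : X → X)^[K+1] a) δ hδ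
  obtain ⟨n₂, hn₂ge, hn₂⟩ := ha δ hδ (n₁ + 1)
  obtain ⟨m₁, hm₁⟩ := hdense ((f : X → X)^[K+1] b) δ hδ
  obtain ⟨m₂, hm₂ge, hm₂⟩ := ha δ hδ (m₁ + 1)
  set A := n₂ - n₁ with hA
  set B := m₂ - m₁ with hB
  have hA1 : 1 ≤ A := by omega
  have hB1 : 1 ≤ B := by omega
  have hn₂' : dist ((f : X → X)^[n₁ + A] p) a < δ := by
    rw [show n₁ + A = n₂ by omega]
    exact hn₂
  have hm₂' : dist ((f : X → X)^[m₁ + B] p) a < δ := by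
    rw [show m₁ + B = m₂ by omega]
    exact hm₂
  have habf : dist (f a) ((f : X → X)^[1] b) < δ := by
    rw [Function.iterate_one]
    exact hUC a b hab
  have haaf : dist (f a) ((f : X → X)^[1] a) < δ := by
    rw [Function.iterate_one, dist_self]
    exact hδ
  by_contra hcon
  apply hnsplit
  refine ⟨a, 2*K + A + B + 2, genLoop f a a b p K n₁ A m₁ B, genLoop f a b a p K m₁ B n₁ A,
    ⟨genLoop_eval0 f a a b p K n₁ A m₁ B, genLoop_eval0 f a b a p K m₁ B n₁ A,
      genLoop_eval6 f a a b p K n₁ A m₁ B (by omega),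
      genLoop_eval6 f a b a p K m₁ B n₁ A (by omega),
      genLoop_chain f a a b p K n₁ A m₁ B hδ hK hA1 hB1 haaf (by rw [dist_comm]; exact hn₁)
        hn₂' habf (by rw [dist_comm]; exact hm₁) hm₂',
      fun i hi => genLoop_chain f a b a p K m₁ B n₁ A hδ hK hB1 hA1 habf
        (by rw [dist_comm]; exact hm₁) hm₂' haaf (by rw [dist_comm]; exact hn₁) hn₂'
        i (by omega)⟩,
    K, by omega, ?_⟩
  rw [genLoop_eval1 f a a b p K n₁ A m₁ B hK (le_refl K),
    genLoop_eval1 f a b a p K m₁ B n₁ A hK (le_refl K)]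
  exact lt_of_not_ge fun hge => hcon (le_of_not_gt fun hgt => absurd hge (not_le.mpr hgt))

/-- A positively countably expansive homeomorphism of a compact metric space that is
topologically transitive and has the shadowing property forces `X` to be countable. -/
theorem stmt15 [MetricSpace X] [CompactSpace X] (f : X ≃ₜ X)
    (hexp : ∃ ε : ℝ, 0 < ε ∧ ∀ x : X, (Ws (f : X → X) ε x).Countable)
    (htrans : ∃ p : X, TransitivePoint (f : X → X) p)
    (hsh : Shadowing f) :
    Countable X := by
  obtain ⟨ε, hε, hWs⟩ := hexp
  obtain ⟨p, hp⟩ := htrans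
  have hp' : Dense (Set.range fun n : ℕ => (f : X → X)^[n] p) := hp
  obtain ⟨δ, hδ, hshad⟩ := hsh (ε / 2) (by positivity)
  obtain ⟨δ₀, hδ₀, hUC⟩ : ∃ d : ℝ, 0 < d ∧ ∀ c e : X, dist c e < d → dist (f c) (f e) < δ := by
    obtain ⟨d, hd, h⟩ := Metric.uniformContinuous_iff.mp
      (CompactSpace.uniformContinuous_of_continuous f.continuous) δ hδ
    exact ⟨d, hd, fun c e hce => h hce⟩
  set δ₁ : ℝ := min δ₀ ε with hδ₁def
  have hδ₁ : 0 < δ₁ := lt_min hδ₀ hε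
  have hδ₁ε : δ₁ ≤ ε := min_le_right _ _
  have hUC1 : ∀ c e : X, dist c e < δ₁ → dist (f c) (f e) < δ :=
    fun c e h => hUC c e (lt_of_lt_of_le h (min_le_left _ _))
  by_cases hsplit : ∃ (z : X) (L : ℕ) (u u' : ℕ → X),
      (u 0 = z ∧ u' 0 = z ∧ u L = z ∧ u' L = z ∧
        (∀ i, i < L → dist (f (u i)) (u (i + 1)) < δ) ∧
        (∀ i, i < L → dist (f (u' i)) (u' (i + 1)) < δ)) ∧
      ∃ j, j ≤ L ∧ ε < dist (u j) (u' j)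
  · obtain ⟨z, L, u, u', ⟨h1, h2, h3, h4, h5, h6⟩, j, hj, hsep⟩ := hsplit
    exact (split_absurd f hε hδ hWs hshad z L u u' h1 h2 h3 h4 h5 h6 j hj hsep).elim
  · -- no splitting: the ω-limit set of `p` is locally contained in stable sets
    set W : Set X := {x | ∀ r : ℝ, 0 < r → ∀ N : ℕ, ∃ n, N ≤ n ∧
      dist ((f : X → X)^[n] p) x < r} with hWdef
    have hdense : ∀ (x : X) (r : ℝ), 0 < r → ∃ n : ℕ, dist ((f : X → X)^[n] p) x < r := by
      intro x r hr
      obtain ⟨yy, hy1, hy2⟩ := Metric.mem_closure_iff.mp (hp' x) r hr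
      obtain ⟨n, rfl⟩ := hy1
      exact ⟨n, by rwa [dist_comm]⟩
    have hWc : W.Countable := by
      have htb : TotallyBounded W := (isCompact_univ.totallyBounded).subset (Set.subset_univ W)
      obtain ⟨t, hts, htf, hcov⟩ := (totallyBounded_iff_subset.mp htb)
        {q : X × X | dist q.1 q.2 < δ₁} (Metric.dist_mem_uniformity hδ₁)
      apply Set.Countable.mono ?_ (Set.Countable.biUnion htf.countable
        (fun (y : X) _ => hWs y))
      intro b hb
      obtain ⟨y, hyt, hyb⟩ := Set.mem_iUnion₂.mp (hcov hb)
      refine Set.mem_iUnion₂.mpr ⟨y, hyt, ?_⟩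
      have hyb0 : dist b y < δ₁ := hyb
      have hyb' : dist y b < δ₁ := by rwa [dist_comm]
      have hstab := no_split_stable f hδ hδ₁ε hUC1 p hp' hsplit y b (hts hyt) hyb'
      intro k
      rw [dist_comm]
      exact hstab k
    have hXsub : (Set.univ : Set X) ⊆ (Set.range fun n : ℕ => (f : X → X)^[n] p) ∪ W := by
      intro x _
      by_cases hx : x ∈ W
      · exact Or.inr hx
      · left
        rw [hWdef, Set.mem_setOf_eq] at hx
        push_neg at hx
        obtain ⟨r, hr, N, hN⟩ := hx
        have hSfin : ((fun n : ℕ => (f : X → X)^[n] p) '' (Set.Iio N)).Finite :=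
          (Set.finite_Iio N).image _
        have hclx : x ∈ (fun n : ℕ => (f : X → X)^[n] p) '' (Set.Iio N) := by
          rw [← hSfin.isClosed.closure_eq]
          apply Metric.mem_closure_iff.mpr
          intro ρ hρ
          obtain ⟨n, hn⟩ := hdense x (min ρ r) (lt_min hρ hr)
          have hnN : n < N := by
            by_contra hcontra
            have h1 := hN n (by omega)
            have h2 : dist ((f : X → X)^[n] p) x < r := lt_of_lt_of_le hn (min_le_right _ _)
            linarith
          refine ⟨(f : X → X)^[n] p, ⟨n, hnN, rfl⟩, ?_⟩
          rw [dist_comm]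
          exact lt_of_lt_of_le hn (min_le_left _ _)
        obtain ⟨n, _, rfl⟩ := hclx
        exact ⟨n, rfl⟩
    rw [← Set.countable_univ_iff]
    exact Set.Countable.mono hXsub ((Set.countable_range _).union hWc)
end

section
/- Let $X$ be a compact metric space and $f: X \to X$ a continuous map that is topologically transitive and not uniformly rigid. Then there exists $\gamma > 0$ such that for every transitive point $p$ of $f$ and every $m \in \mathbb{N}$ there is $\tau = \tau(p,m) \in \mathbb{N}$ with $d(f^{\tau}(p), f^{\tau}(f^m(p))) > \gamma$. -/
open Function Metric Filter

variable {X : Type*}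

/-- `f` is uniformly rigid: some subsequence of iterates converges uniformly to the
identity. -/
def UniformlyRigid [MetricSpace X] (f : X → X) : Prop :=
  ∃ n : ℕ → ℕ, StrictMono n ∧ (∀ k, 0 < n k) ∧
    TendstoUniformly (fun k x => f^[n k] x) id Filter.atTop

lemma iter_mul_bound [MetricSpace X] (f : X → X) (m : ℕ) (δ : ℝ)
    (h : ∀ x, dist (f^[m] x) x ≤ δ) : ∀ (j : ℕ) (x : X), dist (f^[j * m] x) x ≤ j * δ := by
  intro j
  induction j with
  | zero => simp
  | succ j ih =>
    intro x
    have hx : f^[(j + 1) * m] x = f^[m] (f^[j * m] x) := by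
      rw [Nat.succ_mul, Nat.add_comm, Function.iterate_add_apply]
    calc dist (f^[(j + 1) * m] x) x
        ≤ dist (f^[(j + 1) * m] x) (f^[j * m] x) + dist (f^[j * m] x) x := dist_triangle _ _ _
      _ ≤ δ + j * δ := by
          rw [hx]; exact add_le_add (h _) (ih x)
      _ = (j + 1 : ℕ) * δ := by push_cast; ring

/-- If a continuous map of a compact metric space is topologically transitive and not
uniformly rigid, then there is `γ > 0` such that for every transitive point `p` and every
`m ≥ 1` there is `τ ∈ ℕ` with `d(f^τ(p), f^τ(f^m(p))) > γ`. -/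
theorem stmt16 [MetricSpace X] [CompactSpace X] (f : X → X) (hc : Continuous f)
    (htrans : ∃ p : X, TransitivePoint f p) (hrig : ¬ UniformlyRigid f) :
    ∃ γ : ℝ, 0 < γ ∧ ∀ p : X, TransitivePoint f p → ∀ m : ℕ, 0 < m →
      ∃ τ : ℕ, γ < dist (f^[τ] p) (f^[τ] (f^[m] p)) := by
  -- Step 1: there is ε > 0 such that every iterate f^[n], n ≥ 1, moves some point by ≥ ε.
  have key : ∃ ε : ℝ, 0 < ε ∧ ∀ n : ℕ, 1 ≤ n → ∃ x : X, ε ≤ dist (f^[n] x) x := by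
    by_contra h
    push_neg at h
    apply hrig
    have hfreq : ∀ k : ℕ, ∃ᶠ n in atTop, (1 ≤ n ∧ ∀ x : X, dist (f^[n] x) x < 1 / (k + 1)) := by
      intro k
      rw [Filter.frequently_atTop]
      intro N
      have hδ : (0:ℝ) < 1 / (2 * (k + 1) * (N + 1)) := by positivity
      obtain ⟨m, hm1, hm2⟩ := h _ hδ
      refine ⟨(N + 1) * m, ?_, ?_, ?_⟩
      · calc N ≤ N + 1 := Nat.le_succ N
          _ = (N + 1) * 1 := (Nat.mul_one _).symm
          _ ≤ (N + 1) * m := Nat.mul_le_mul_left _ hm1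
      · exact le_trans hm1 (Nat.le_mul_of_pos_left m (Nat.succ_pos N))
      · intro x
        have := iter_mul_bound f m _ (fun y => (hm2 y).le) (N + 1) x
        have hlt : ((N:ℝ) + 1) * (1 / (2 * (k + 1) * (N + 1))) < 1 / (k + 1) := by
          rw [mul_one_div, div_lt_div_iff₀ (by positivity) (by positivity)]
          have hN : (0:ℝ) < (N:ℝ) + 1 := by positivity
          have hk' : (0:ℝ) < (k:ℝ) + 1 := by positivity
          nlinarith
        calc dist (f^[(N + 1) * m] x) x ≤ ((N:ℝ) + 1) * (1 / (2 * (k + 1) * (N + 1))) := by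
              push_cast at this ⊢; exact this
          _ < 1 / (k + 1) := hlt
    obtain ⟨φ, hφ, hP⟩ := Filter.extraction_forall_of_frequently hfreq
    refine ⟨φ, hφ, fun k => (hP k).1, ?_⟩
    rw [Metric.tendstoUniformly_iff]
    intro ε hε
    obtain ⟨K, hK⟩ := exists_nat_one_div_lt hε
    filter_upwards [Filter.eventually_ge_atTop K] with k hk x
    have hKk : ((K:ℝ) + 1) ≤ (k:ℝ) + 1 := by exact_mod_cast Nat.succ_le_succ hk
    have h1 : (1:ℝ) / (k + 1) ≤ 1 / (K + 1) := one_div_le_one_div_of_le (by positivity) hKk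
    calc dist (id x) (f^[φ k] x) = dist (f^[φ k] x) x := dist_comm _ _
      _ < 1 / (k + 1) := (hP k).2 x
      _ ≤ 1 / (K + 1) := h1
      _ < ε := hK
  obtain ⟨ε, hε, hkey⟩ := key
  refine ⟨ε / 4, by linarith, ?_⟩
  intro p hp m hm
  obtain ⟨x, hx⟩ := hkey m hm
  -- continuity of f^[m] at x
  have hcm : Continuous (f^[m]) := hc.iterate m
  obtain ⟨δ, hδpos, hδ⟩ := Metric.continuous_iff.mp hcm x (ε / 4) (by linarith)
  have hδ'pos : 0 < min δ (ε / 4) := lt_min hδpos (by linarith)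
  obtain ⟨y, hy, hyx⟩ := hp.exists_dist_lt x hδ'pos
  obtain ⟨n, rfl⟩ := hy
  refine ⟨n, ?_⟩
  have h1 : dist (f^[n] p) x < δ := by
    rw [dist_comm] at hyx; exact hyx.trans_le (min_le_left _ _)
  have h2 : dist (f^[n] p) x < ε / 4 := by
    rw [dist_comm] at hyx; exact hyx.trans_le (min_le_right _ _)
  have h3 : dist (f^[m] (f^[n] p)) (f^[m] x) < ε / 4 := hδ _ h1
  have hcomm : f^[n] (f^[m] p) = f^[m] (f^[n] p) := by
    rw [← Function.iterate_add_apply, ← Function.iterate_add_apply, Nat.add_comm]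
  rw [hcomm]
  have htri : dist (f^[m] x) x ≤
      dist (f^[m] x) (f^[m] (f^[n] p)) + dist (f^[m] (f^[n] p)) (f^[n] p) + dist (f^[n] p) x :=
    dist_triangle4 _ _ _ _
  rw [dist_comm]
  linarith [dist_comm x (f^[m] x), dist_comm (f^[m] x) (f^[m] (f^[n] p))]
end
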